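/- arXiv:0807.4735 — 5 statements merged into one kernel-verified Lean document; each statement's English description precedes it below -/
import Mathlib

section
/- If ū ⊆ co(V) is a subalgebra of nilpotents, then every composition X_1 ∘ X_2 ∘ ⋯ ∘ X_{2p+1} of 2p+1 elements of ū is the zero endomorphism; that is, the order of nilpotence o(ū) is at most 2p+1. -/
/-- A bilinear form `B` on a real vector space has signature `(p,q)` if it diagonalizes in some
basis with `p` entries equal to `−1` followed by `q` entries equal to `1`. -/
def HasSignature (V : Type*) [AddCommGroup V] [Module ℝ V]
    (B : V →ₗ[ℝ] V →ₗ[ℝ] ℝ) (p q : ℕ) : Prop :=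
  ∃ b : Module.Basis (Fin (p+q)) ℝ V, ∀ i j, B (b i) (b j) =
    if i = j then (if (i:ℕ) < p then -1 else 1) else 0

/-- Membership in the conformal Lie algebra `co(V)` of a bilinear form `B`:
`X` is infinitesimally conformal if `B(Xu, v) + B(u, Xv) = λ(X)·B(u,v)` for some `λ(X) ∈ ℝ`. -/
def MemCO (V : Type*) [AddCommGroup V] [Module ℝ V]
    (B : V →ₗ[ℝ] V →ₗ[ℝ] ℝ) (X : Module.End ℝ V) : Prop :=
  ∃ lam : ℝ, ∀ u v : V, B (X u) v + B u (X v) = lam * B u v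

section Aux

variable {V : Type*} [AddCommGroup V] [Module ℝ V] [FiniteDimensional ℝ V]
variable {p q : ℕ} {B : V →ₗ[ℝ] V →ₗ[ℝ] ℝ}

/-- Expansion of `B v w` in a diagonalizing basis. -/
theorem aux_B_expand (b : Module.Basis (Fin (p+q)) ℝ V)
    (hb : ∀ i j, B (b i) (b j) = if i = j then (if (i:ℕ) < p then (-1:ℝ) else 1) else 0)
    (v w : V) :
    B v w = ∑ i, b.repr v i * (b.repr w i * (if (i:ℕ) < p then (-1:ℝ) else 1)) := by
  conv_lhs => rw [← b.sum_repr v, ← b.sum_repr w]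
  simp only [map_sum, map_smul, LinearMap.sum_apply, LinearMap.smul_apply, smul_eq_mul, hb,
    mul_ite, mul_zero, mul_one]
  refine Finset.sum_congr rfl fun i _ => ?_
  rw [Finset.sum_ite_eq' Finset.univ i]
  simp only [Finset.mem_univ, if_true]
  split <;> ring

/-- An isotropic subspace has dimension at most `p`. -/
theorem aux_isotropic_dim (b : Module.Basis (Fin (p+q)) ℝ V)
    (hb : ∀ i j, B (b i) (b j) = if i = j then (if (i:ℕ) < p then (-1:ℝ) else 1) else 0)
    (W : Submodule ℝ V) (hW : ∀ x ∈ W, B x x = 0) :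
    Module.finrank ℝ W ≤ p := by
  classical
  set e : Fin q → Fin (p+q) := fun j => ⟨p + j, by omega⟩ with he
  have heinj : Function.Injective e := by
    intro a c h
    simpa [he, Fin.ext_iff] using h
  set Q : Submodule ℝ V := Submodule.span ℝ (Set.range (b ∘ e)) with hQ
  have hQdim : Module.finrank ℝ Q = q := by
    rw [hQ, finrank_span_eq_card (b.linearIndependent.comp e heinj)]
    simp
  have hWQ : W ⊓ Q = ⊥ := by
    rw [eq_bot_iff]
    intro x hx
    obtain ⟨hxW, hxQ⟩ := hx
    have hsupp : ↑(b.repr x).support ⊆ Set.range e := by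
      have : x ∈ Submodule.span ℝ (b '' Set.range e) := by
        rwa [← Set.range_comp]
      exact b.repr_support_subset_of_mem_span _ this
    have hBxx := aux_B_expand b hb x x
    rw [hW x hxW] at hBxx
    have hterm : ∀ i : Fin (p+q),
        b.repr x i * (b.repr x i * (if (i:ℕ) < p then (-1:ℝ) else 1)) = (b.repr x i)^2 := by
      intro i
      by_cases hi : b.repr x i = 0
      · simp [hi]
      · have : i ∈ Set.range e := hsupp (by simpa using hi)
        obtain ⟨j, rfl⟩ := this
        have : ¬ ((e j : ℕ) < p) := by simp [he]
        rw [if_neg this]; ring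
    rw [Finset.sum_congr rfl (fun i _ => hterm i)] at hBxx
    have hall : ∀ i : Fin (p+q), b.repr x i = 0 := by
      intro i
      have h0 := (Finset.sum_eq_zero_iff_of_nonneg
        (fun i _ => sq_nonneg (b.repr x i))).mp hBxx.symm i (Finset.mem_univ i)
      exact pow_eq_zero_iff (by norm_num) |>.mp h0
    have : b.repr x = 0 := Finsupp.ext hall
    simpa [Submodule.mem_bot] using (b.repr.map_eq_zero_iff).mp this
  have h1 := Submodule.finrank_sup_add_finrank_inf_eq W Q
  rw [hWQ] at h1
  have h2 : Module.finrank ℝ ↥(W ⊔ Q) ≤ p + q := by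
    have := Submodule.finrank_le (W ⊔ Q)
    rwa [Module.finrank_eq_card_basis b, Fintype.card_fin] at this
  simp only [finrank_bot, add_zero] at h1
  omega

end Aux

attribute [local instance 100] LieRing.ofAssociativeRing

/-- If `ū ⊆ co(V)` is a Lie subalgebra all of whose elements are nilpotent endomorphisms,
where `B` has signature `(p,q)`, then every composition of `2p+1` elements of `ū` vanishes:
the order of nilpotence of `ū` is at most `2p+1`. -/
theorem order_of_nilpotence_le_of_subalgebra_of_nilpotents_in_co
    (V : Type*) [AddCommGroup V] [Module ℝ V] [FiniteDimensional ℝ V]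
    (p q : ℕ) (B : V →ₗ[ℝ] V →ₗ[ℝ] ℝ) (hsig : HasSignature V B p q)
    (u : LieSubalgebra ℝ (Module.End ℝ V))
    (hco : ∀ X ∈ u, MemCO V B X)
    (hnil : ∀ X ∈ u, IsNilpotent X) :
    ∀ X : Fin (2*p+1) → Module.End ℝ V, (∀ i, X i ∈ u) →
      Fin.foldr (2*p+1) (fun i acc => X i * acc) 1 = 0 := by
  classical
  obtain ⟨b, hb⟩ := hsig
  intro X hX
  -- trivial case : V is trivial
  by_cases hpq : p + q = 0
  · have : IsEmpty (Fin (p+q)) := by rw [hpq]; exact Fin.isEmpty'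
    have hsub : Subsingleton V := by
      have := b.repr.toEquiv.subsingleton_congr.mpr ?_
      · exact this
      · infer_instance
    exact LinearMap.ext fun v => Subsingleton.elim _ _
  -- skewness of all elements of u
  have hskew : ∀ Z ∈ u, ∀ a c : V, B (Z a) c = - B a (Z c) := by
    intro Z hZ
    obtain ⟨lam, hlam⟩ := hco Z hZ
    have hrepr : ∀ i : Fin (p+q), lam * (if (i:ℕ) < p then (-1:ℝ) else 1)
        = 2 * (b.repr (Z (b i)) i * (if (i:ℕ) < p then (-1:ℝ) else 1)) := by
      intro i
      have h1 := hlam (b i) (b i)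
      rw [aux_B_expand b hb (Z (b i)) (b i), aux_B_expand b hb (b i) (Z (b i)), hb i i] at h1
      simp only [Module.Basis.repr_self, Finsupp.single_apply] at h1
      rw [Finset.sum_congr rfl (g := fun j =>
          if i = j then b.repr (Z (b i)) j * (if (j:ℕ) < p then (-1:ℝ) else 1) else 0) ?hg1,
        Finset.sum_ite_eq Finset.univ i] at h1
      case hg1 =>
        intro j _
        by_cases hji : i = j
        · simp [hji]
        · simp [hji]
      rw [Finset.sum_congr rfl (g := fun j =>
          if i = j then b.repr (Z (b i)) j * (if (j:ℕ) < p then (-1:ℝ) else 1) else 0) ?hg2,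
        Finset.sum_ite_eq Finset.univ i] at h1
      case hg2 =>
        intro j _
        by_cases hji : i = j
        · simp [hji]
        · simp [hji]
      simp only [Finset.mem_univ, if_true] at h1
      linarith
    have hdiag : ∀ i : Fin (p+q), lam = 2 * b.repr (Z (b i)) i := by
      intro i
      have := hrepr i
      by_cases hi : (i:ℕ) < p <;> simp [hi] at this <;> linarith
    have htr : LinearMap.trace ℝ V Z = ∑ i, b.repr (Z (b i)) i := by
      rw [LinearMap.trace_eq_matrix_trace ℝ b Z, Matrix.trace]
      refine Finset.sum_congr rfl fun i _ => ?_
      rw [Matrix.diag_apply, LinearMap.toMatrix_apply]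
    have htr0 : LinearMap.trace ℝ V Z = 0 :=
      (LinearMap.isNilpotent_trace_of_isNilpotent (hnil Z hZ)).eq_zero
    have hlam0 : lam = 0 := by
      have hsum : (0:ℝ) = ∑ _i : Fin (p+q), lam / 2 := by
        rw [← htr0, htr]
        exact Finset.sum_congr rfl fun i _ => by rw [hdiag i]; ring
      rw [Finset.sum_const, Finset.card_univ, Fintype.card_fin, nsmul_eq_mul] at hsum
      have : (p+q : ℝ) ≠ 0 := by
        exact_mod_cast Nat.cast_ne_zero.mpr hpq
      field_simp at hsum
      push_cast at hsum
      rcases mul_eq_zero.mp (by linarith : ((p:ℝ) + q) * lam = 0) with h0 | h0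
      · exact absurd h0 this
      · exact h0
    intro a c
    have := hlam a c
    rw [hlam0, zero_mul] at this
    linarith
  -- Engel's theorem: V is a nilpotent Lie module over u
  have hnilmod : LieModule.IsNilpotent u V := by
    rw [LieModule.isNilpotent_iff_forall' (R := ℝ)]
    intro x
    have hx : LieModule.toEnd ℝ (↥u) V x = (x : Module.End ℝ V) := by
      ext m; rfl
    rw [hx]
    exact hnil x x.2
  have hex : ∃ k, LieModule.lowerCentralSeries ℝ u V k = ⊥ := (LieModule.isNilpotent_iff ℝ u V).mp hnilmod
  set N := Nat.find hex with hN
  have hNbot : LieModule.lowerCentralSeries ℝ u V N = ⊥ := Nat.find_spec hex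
  have hNmin : ∀ m, m < N → LieModule.lowerCentralSeries ℝ u V m ≠ ⊥ :=
    fun m hm => Nat.find_min hex hm
  set W : ℕ → Submodule ℝ V :=
    fun k => (LieModule.lowerCentralSeries ℝ u V k : Submodule ℝ V) with hW
  have hmap : ∀ k, ∀ Z ∈ u, ∀ x ∈ W k, Z x ∈ W (k+1) := by
    intro k Z hZ x hx
    have hx' : x ∈ LieModule.lowerCentralSeries ℝ u V k := hx
    have h1 : ⁅(⟨Z, hZ⟩ : u), x⁆ ∈
        ⁅(⊤ : LieIdeal ℝ u), LieModule.lowerCentralSeries ℝ u V k⁆ :=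
      LieSubmodule.lie_mem_lie (LieSubmodule.mem_top _) hx'
    show Z x ∈ LieModule.lowerCentralSeries ℝ u V (k+1)
    rw [LieModule.lowerCentralSeries_succ]
    exact h1
  -- isotropy relations
  have hiso : ∀ (j i : ℕ), W (i + j) = ⊥ → ∀ x ∈ W i, ∀ y ∈ W j, B x y = 0 := by
    intro j
    induction j with
    | zero =>
      intro i hbot x hx y _
      rw [Nat.add_zero] at hbot
      rw [hbot, Submodule.mem_bot] at hx
      simp [hx]
    | succ j IH =>
      intro i hbot x hx y hy
      have hy2 : y ∈ ⁅(⊤ : LieIdeal ℝ u), LieModule.lowerCentralSeries ℝ u V j⁆ := by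
        have hy1 : y ∈ LieModule.lowerCentralSeries ℝ u V (j+1) := hy
        rwa [LieModule.lowerCentralSeries_succ] at hy1
      have hy' : y ∈ Submodule.span ℝ
          {m | ∃ z ∈ (⊤ : LieIdeal ℝ u), ∃ n ∈ LieModule.lowerCentralSeries ℝ u V j, ⁅z, n⁆ = m} := by
        rw [← LieSubmodule.lieIdeal_oper_eq_linear_span']
        exact hy2
      refine Submodule.span_induction ?_ ?_ ?_ ?_ hy'
      · rintro m ⟨z, -, n, hn, rfl⟩
        have hzx : (z : Module.End ℝ V) x ∈ W (i+1) := hmap i z z.2 x hx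
        have hbot' : W ((i+1) + j) = ⊥ := by
          rw [show (i+1)+j = i + (j+1) by omega]; exact hbot
        have hBm : B x ((z : Module.End ℝ V) n) = - B ((z : Module.End ℝ V) x) n := by
          have := hskew (z : Module.End ℝ V) z.2 x n
          linarith
        have : B x ((z : Module.End ℝ V) n) = 0 := by
          rw [hBm, IH (i+1) hbot' _ hzx n hn, neg_zero]
        exact this
      · simp
      · intro a c _ _ ha hc
        rw [map_add, ha, hc, add_zero]
      · intro t a _ ha
        rw [map_smul, ha, smul_zero]
  -- strict decrease of the lower central series below N
  have hstab : ∀ k, LieModule.lowerCentralSeries ℝ u V (k+1) = LieModule.lowerCentralSeries ℝ u V k →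
      ∀ d, LieModule.lowerCentralSeries ℝ u V (k+d) = LieModule.lowerCentralSeries ℝ u V k := by
    intro k hk d
    induction d with
    | zero => rfl
    | succ d IH =>
      rw [show k + (d+1) = (k+d) + 1 by omega, LieModule.lowerCentralSeries_succ, IH,
        ← LieModule.lowerCentralSeries_succ, hk]
  have hstrict : ∀ k, k < N →
      LieModule.lowerCentralSeries ℝ u V (k+1) < LieModule.lowerCentralSeries ℝ u V k := by
    intro k hk
    refine lt_of_le_of_ne (LieModule.antitone_lowerCentralSeries ℝ u V (Nat.le_succ k)) ?_
    intro heq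
    have h1 := hstab k heq (N - k)
    rw [show k + (N - k) = N by omega, hNbot] at h1
    exact hNmin k hk h1.symm
  -- dimension counting
  have hdim : ∀ j, j ≤ N → j ≤ Module.finrank ℝ (W (N - j)) := by
    intro j
    induction j with
    | zero => intro _; exact Nat.zero_le _
    | succ j IH =>
      intro hj
      have h1 : N - (j+1) < N := by omega
      have h2 := hstrict (N - (j+1)) h1
      rw [show N - (j+1) + 1 = N - j by omega] at h2
      have h3 : W (N - j) < W (N - (j+1)) := by
        refine lt_of_le_of_ne ((LieSubmodule.toSubmodule_le_toSubmodule _ _).mpr h2.le) ?_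
        intro hc
        exact h2.ne (LieSubmodule.toSubmodule_injective hc)
      have h4 := Submodule.finrank_lt_finrank_of_lt h3
      have h5 := IH (by omega)
      omega
  -- the middle term of the series is isotropic and of dimension ≥ ⌊N/2⌋
  set h : ℕ := (N + 1) / 2 with hh
  have hbot2 : W (h + h) = ⊥ := by
    have h1 : LieModule.lowerCentralSeries ℝ u V (h + h) = ⊥ :=
      le_bot_iff.mp (hNbot ▸ LieModule.antitone_lowerCentralSeries ℝ u V (by omega))
    show ((LieModule.lowerCentralSeries ℝ u V (h + h) : Submodule ℝ V)) = ⊥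
    rw [h1, LieSubmodule.bot_toSubmodule]
  have hWh : ∀ x ∈ W h, B x x = 0 := fun x hx => hiso h h hbot2 x hx x hx
  have hdimh : Module.finrank ℝ (W h) ≤ p := aux_isotropic_dim b hb (W h) hWh
  have hNle : N ≤ 2 * p + 1 := by
    have h1 := hdim (N - h) (by omega)
    rw [show N - (N - h) = h by omega] at h1
    omega
  -- the product of 2p+1 elements lands in W (2p+1) = ⊥
  have hprod : ∀ (n : ℕ) (Y : Fin n → Module.End ℝ V), (∀ i, Y i ∈ u) →
      ∀ v : V, Fin.foldr n (fun i acc => Y i * acc) 1 v ∈ W n := by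
    intro n
    induction n with
    | zero =>
      intro Y _ v
      show (1 : Module.End ℝ V) v ∈ LieModule.lowerCentralSeries ℝ u V 0
      rw [LieModule.lowerCentralSeries_zero]
      exact LieSubmodule.mem_top _
    | succ n IH =>
      intro Y hY v
      rw [Fin.foldr_succ]
      exact hmap n (Y 0) (hY 0) _ (IH (fun i => Y i.succ) (fun i => hY i.succ) v)
  have hfinal : W (2*p+1) = ⊥ := by
    have h1 : LieModule.lowerCentralSeries ℝ u V (2*p+1) = ⊥ :=
      le_bot_iff.mp (hNbot ▸ LieModule.antitone_lowerCentralSeries ℝ u V hNle)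
    show ((LieModule.lowerCentralSeries ℝ u V (2*p+1) : Submodule ℝ V)) = ⊥
    rw [h1, LieSubmodule.bot_toSubmodule]
  ext v
  have h1 := hprod (2*p+1) X hX v
  rw [hfinal, Submodule.mem_bot] at h1
  simpa using h1
end

section
/- For every U ∈ V with B(U,U) = 0 and B(U,e) = 1, there exists a unipotent isometry g of (V,B) with g(e) = e and g(f) = U. -/
/-- Let `(V,B)` be of signature `(p,q)` with `1 ≤ p ≤ q` and `p+q ≥ 3`, and let `e, f` be null
vectors with `B(e,f) = 1`.  For every null vector `U` with `B(U,e) = 1` there is a unipotent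
isometry `g` of `(V,B)` with `g e = e` and `g f = U`. -/
theorem exists_unipotent_isometry_moving_f
    (V : Type*) [AddCommGroup V] [Module ℝ V] [FiniteDimensional ℝ V]
    (p q : ℕ) (hp : 1 ≤ p) (hpq : p ≤ q) (hn : 3 ≤ p+q)
    (B : V →ₗ[ℝ] V →ₗ[ℝ] ℝ) (hsig : HasSignature V B p q)
    (e f : V) (he : B e e = 0) (hf : B f f = 0) (hef : B e f = 1)
    (U : V) (hU : B U U = 0) (hUe : B U e = 1) :
    ∃ g : V ≃ₗ[ℝ] V,
      (∀ u v : V, B (g u) (g v) = B u v) ∧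
      IsNilpotent ((g : V →ₗ[ℝ] V) - LinearMap.id) ∧
      g e = e ∧ g f = U := by
  classical
  obtain ⟨b, hb⟩ := hsig
  have hsymm : ∀ u v : V, B u v = B v u := by
    have hB : B = B.flip := by
      apply b.ext; intro i
      apply b.ext; intro j
      rw [LinearMap.flip_apply, hb i j, hb j i]
      by_cases h : i = j
      · subst h; rfl
      · simp [h, Ne.symm h]
    intro u v
    conv_lhs => rw [hB]
    rfl
  set w : V := U - f with hw
  have hfe : B f e = 1 := by rw [hsymm]; exact hef
  have hwe : B w e = 0 := by
    simp [hw, map_sub, LinearMap.sub_apply, hUe, hfe]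
  have hew : B e w = 0 := by rw [hsymm]; exact hwe
  have hUf : B U f = B f U := hsymm U f
  have hww : B w w = -2 * B f U := by
    simp [hw, map_sub, LinearMap.sub_apply, hU, hf, hUf]; ring
  have hfw : B f w = B f U := by
    simp [hw, map_sub, LinearMap.sub_apply, hf]
  set N : V →ₗ[ℝ] V :=
    (B.flip e).smulRight w - ((B.flip w) + (B w w / 2) • (B.flip e)).smulRight e with hNdef
  have hNapp : ∀ v : V, N v = B v e • w - (B v w + (B w w / 2) * B v e) • e := by
    intro v
    simp [hNdef, LinearMap.smulRight_apply, LinearMap.sub_apply, LinearMap.add_apply,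
      LinearMap.smul_apply, LinearMap.flip_apply, smul_eq_mul]
  have hNe : N e = 0 := by
    rw [hNapp]; simp [he, hew]
  have hNw : N w = (-(B w w)) • e := by
    rw [hNapp]; simp [hwe]
  have hN2 : ∀ v : V, N (N v) = (-(B v e * B w w)) • e := by
    intro v
    rw [hNapp v, map_sub, map_smul, map_smul, hNw, hNe, smul_smul]
    simp [mul_comm]
  have hN3 : ∀ v : V, N (N (N v)) = 0 := by
    intro v
    rw [hN2 v, map_smul, hNe, smul_zero]
  set M : V →ₗ[ℝ] V := LinearMap.id + N with hM
  set Minv : V →ₗ[ℝ] V := LinearMap.id - N + N ∘ₗ N with hMinv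
  have comp1 : M ∘ₗ Minv = LinearMap.id := by
    apply LinearMap.ext; intro v
    simp only [hM, hMinv, LinearMap.comp_apply, LinearMap.add_apply, LinearMap.sub_apply,
      LinearMap.id_apply, map_add, map_sub, hN3 v]
    abel
  have comp2 : Minv ∘ₗ M = LinearMap.id := by
    apply LinearMap.ext; intro v
    simp only [hM, hMinv, LinearMap.comp_apply, LinearMap.add_apply, LinearMap.sub_apply,
      LinearMap.id_apply, map_add, map_sub, hN3 v]
    abel
  refine ⟨LinearEquiv.ofLinear M Minv comp1 comp2, ?_, ?_, ?_, ?_⟩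
  · intro u v
    show B (M u) (M v) = B u v
    have h1 : B w v = B v w := hsymm w v
    have h2 : B e v = B v e := hsymm e v
    simp only [hM, LinearMap.add_apply, LinearMap.id_apply, hNapp, map_add, map_sub, map_smul,
      LinearMap.add_apply, LinearMap.sub_apply, LinearMap.smul_apply, smul_eq_mul,
      h1, h2, he, hwe, hew]
    ring
  · have hcoe : ((LinearEquiv.ofLinear M Minv comp1 comp2 : V ≃ₗ[ℝ] V) : V →ₗ[ℝ] V)
        - LinearMap.id = N := by
      have : ((LinearEquiv.ofLinear M Minv comp1 comp2 : V ≃ₗ[ℝ] V) : V →ₗ[ℝ] V) = M := rfl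
      rw [this, hM, add_sub_cancel_left]
    rw [hcoe]
    refine ⟨3, ?_⟩
    apply LinearMap.ext; intro v
    simp [pow_succ, Module.End.mul_apply, hN3 v]
  · show M e = e
    simp [hM, hNe]
  · show M f = U
    have : N f = w := by
      rw [hNapp, hfe, hfw, hww]
      have hz : B f U + -2 * B f U / 2 * 1 = (0:ℝ) := by ring
      rw [hz, zero_smul, one_smul, sub_zero]
    simp only [hM, LinearMap.add_apply, LinearMap.id_apply, this, hw]
    abel
end

section
/- For all s, t ∈ ℝ with 1 + st ≠ 0, setting c = t/(1+st), one has the identity of (n+2)×(n+2) real matrices (I − c·U_n)(I + s·T)(I + t·U_n) = D + s·T, where D is the diagonal matrix diag(1+st, 1+st, 1, …, 1, (1+st)^{-1}, (1+st)^{-1}). -/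
open Matrix

/-- The null translation `T`: `T_{0,n} = 1`, `T_{1,n+1} = −1`, all other entries 0
(here `n = p+q`). -/
noncomputable def Tmat (p q : ℕ) : Matrix (Fin (p+q+2)) (Fin (p+q+2)) ℝ :=
  Matrix.single 0 ⟨p+q, by omega⟩ 1 - Matrix.single 1 (Fin.last (p+q+1)) 1

/-- The matrix `U_n = E_{n,0} − E_{n+1,1}` (here `n = p+q`). -/
noncomputable def Un (p q : ℕ) : Matrix (Fin (p+q+2)) (Fin (p+q+2)) ℝ :=
  Matrix.single ⟨p+q, by omega⟩ 0 1 - Matrix.single (Fin.last (p+q+1)) 1 1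

/-- The diagonal matrix `diag(1+st, 1+st, 1, …, 1, (1+st)⁻¹, (1+st)⁻¹)`. -/
noncomputable def Dmat (p q : ℕ) (s t : ℝ) : Matrix (Fin (p+q+2)) (Fin (p+q+2)) ℝ :=
  Matrix.diagonal (fun i => if (i:ℕ) ≤ 1 then 1 + s*t
    else if p+q ≤ (i:ℕ) then (1 + s*t)⁻¹ else 1)

/-- Abstract expansion lemma. -/
lemma holonomy_aux {N : Type*} [Fintype N] [DecidableEq N]
    (A B : Matrix N N ℝ) (s t c : ℝ)
    (hBB : B * B = 0) (hBAB : B * (A * B) = B) (hc : c * (1 + s*t) = t) :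
    (1 - c • B) * (1 + s • A) * (1 + t • B)
      = 1 + s • A + (s*t) • (A * B) - (c*s) • (B * A) := by
  have h1 : (1 + s • A) * (1 + t • B) = 1 + s • A + t • B + (s*t) • (A * B) := by
    simp only [mul_add, add_mul, mul_one, one_mul, smul_mul_assoc, mul_smul_comm,
      smul_add, smul_smul, mul_comm t s]
    abel
  have h2 : B * ((1 + s • A) * (1 + t • B)) = (1 + s*t) • B + s • (B * A) := by
    rw [h1]
    simp only [mul_add, mul_one, mul_smul_comm, hBB, hBAB, smul_zero, add_smul, one_smul]
    abel
  calc (1 - c • B) * (1 + s • A) * (1 + t • B)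
      = (1 + s • A) * (1 + t • B) - c • (B * ((1 + s • A) * (1 + t • B))) := by
        rw [mul_assoc, sub_mul, one_mul, smul_mul_assoc]
    _ = 1 + s • A + t • B + (s*t) • (A * B) - (c • ((1 + s*t) • B + s • (B * A))) := by
        rw [h2, h1]
    _ = 1 + s • A + (s*t) • (A * B) - (c*s) • (B * A) := by
        rw [smul_add, smul_smul, smul_smul, hc]
        abel

/-- For `1 ≤ p ≤ q`, `n = p+q ≥ 3`, and all `s, t ∈ ℝ` with `1 + st ≠ 0`, setting
`c = t/(1+st)`, one has `(I − c·Uₙ)(I + s·T)(I + t·Uₙ) = D + s·T`. -/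
theorem holonomy_matrix_identity (p q : ℕ) (hp : 1 ≤ p) (hpq : p ≤ q) (hn : 3 ≤ p+q)
    (s t : ℝ) (hst : 1 + s*t ≠ 0) :
    (1 - (t/(1+s*t)) • Un p q) * (1 + s • Tmat p q) * (1 + t • Un p q)
      = Dmat p q s t + s • Tmat p q := by
  have hnlt : p+q < p+q+2 := by omega
  set nn : Fin (p+q+2) := ⟨p+q, hnlt⟩ with hnn
  set ll : Fin (p+q+2) := Fin.last (p+q+1) with hll
  have h0 : ((0 : Fin (p+q+2)) : ℕ) = 0 := rfl
  have h1 : ((1 : Fin (p+q+2)) : ℕ) = 1 := by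
    simp [Fin.val_one]
  have hlv : (ll : ℕ) = p+q+1 := rfl
  have hnv : (nn : ℕ) = p+q := rfl
  have hne1 : (0 : Fin (p+q+2)) ≠ nn := by
    simp only [Fin.ne_iff_vne, h0, hnv]; omega
  have hne2 : (0 : Fin (p+q+2)) ≠ ll := by
    simp only [Fin.ne_iff_vne, h0, hlv]; omega
  have hne3 : (1 : Fin (p+q+2)) ≠ nn := by
    simp only [Fin.ne_iff_vne, h1, hnv]; omega
  have hne4 : (1 : Fin (p+q+2)) ≠ ll := by
    simp only [Fin.ne_iff_vne, h1, hlv]; omega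
  have hne5 : nn ≠ ll := by
    simp only [Fin.ne_iff_vne, hnv, hlv]; omega
  have hne01 : (0 : Fin (p+q+2)) ≠ 1 := by
    simp only [Fin.ne_iff_vne, h0, h1]; omega
  have hT : Tmat p q = Matrix.single 0 nn 1 - Matrix.single 1 ll 1 := rfl
  have hU : Un p q = Matrix.single nn 0 1 - Matrix.single ll 1 1 := rfl
  -- products
  have hTU : Tmat p q * Un p q
      = Matrix.single (0 : Fin (p+q+2)) 0 1 + Matrix.single 1 1 1 := by
    rw [hT, hU, sub_mul, mul_sub, mul_sub,
      single_mul_single_same, single_mul_single_of_ne (h := hne5),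
      single_mul_single_of_ne (h := hne5.symm), single_mul_single_same]
    simp
  have hUT : Un p q * Tmat p q
      = Matrix.single nn nn 1 + Matrix.single ll ll 1 := by
    rw [hU, hT, sub_mul, mul_sub, mul_sub,
      single_mul_single_same, single_mul_single_of_ne (h := hne01),
      single_mul_single_of_ne (h := hne01.symm), single_mul_single_same]
    simp
  have hUU : Un p q * Un p q = 0 := by
    rw [hU, sub_mul, mul_sub, mul_sub,
      single_mul_single_of_ne (h := hne1), single_mul_single_of_ne (h := hne2),
      single_mul_single_of_ne (h := hne3), single_mul_single_of_ne (h := hne4)]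
    simp
  have hUTU : Un p q * (Tmat p q * Un p q) = Un p q := by
    rw [hTU, hU, sub_mul, mul_add, mul_add,
      single_mul_single_same, single_mul_single_of_ne (h := hne01.symm),
      single_mul_single_of_ne (h := hne01), single_mul_single_same]
    simp
  have hc : (t/(1+s*t)) * (1 + s*t) = t := div_mul_cancel₀ t hst
  rw [holonomy_aux (Tmat p q) (Un p q) s t (t/(1+s*t)) hUU hUTU hc, hTU, hUT]
  have hD : Dmat p q s t
      = 1 + (s*t) • (Matrix.single (0 : Fin (p+q+2)) 0 1 + Matrix.single 1 1 1)
        - ((t/(1+s*t))*s) • (Matrix.single nn nn 1 + Matrix.single ll ll 1) := by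
    have hcoef : 1 - t/(1+s*t)*s = (1+s*t)⁻¹ := by
      rw [div_mul_eq_mul_div, one_sub_div hst]
      ring
    ext i j
    simp only [Dmat, diagonal_apply, Matrix.add_apply, Matrix.sub_apply, Matrix.one_apply,
      Matrix.smul_apply, Matrix.single, of_apply, smul_eq_mul, and_self]
    by_cases hij : i = j
    · subst hij
      by_cases hi0 : i = 0
      · subst hi0
        simp [h0, hne01.symm, hne1.symm, hne2.symm]
      · by_cases hi1 : i = 1
        · subst hi1
          simp [h1, hne01, hne3.symm, hne4.symm]
        · have hile : ¬ ((i:ℕ) ≤ 1) := by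
            intro h
            rcases Nat.le_one_iff_eq_zero_or_eq_one.mp h with h' | h'
            · exact hi0 (Fin.ext (by rw [h', h0]))
            · exact hi1 (Fin.ext (by rw [h', h1]))
          by_cases hin : i = nn
          · subst hin
            have hx : ¬ ((p:ℕ)+q ≤ 1) := by omega
            simp [hnv, hne1, hne3, hne5.symm, hx]
            exact hcoef.symm
          · by_cases hil : i = ll
            · subst hil
              have hx : ¬ ((p:ℕ)+q+1 ≤ 1) := by omega
              have hy : (p:ℕ)+q ≤ p+q+1 := by omega
              simp [hlv, hx, hy, hne2, hne4, hne5]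
              exact hcoef.symm
            · have hnle : ¬ (p+q ≤ (i:ℕ)) := by
                intro h
                have hlt := i.isLt
                have h' : (i:ℕ) = p+q ∨ (i:ℕ) = p+q+1 := by omega
                rcases h' with h' | h'
                · exact hin (Fin.ext (by rw [h', hnv]))
                · exact hil (Fin.ext (by rw [h', hlv]))
              simp [hile, hnle, Ne.symm hi0, Ne.symm hi1, Ne.symm hin, Ne.symm hil]
    · have e0 : ¬((0:Fin (p+q+2)) = i ∧ (0:Fin (p+q+2)) = j) :=
        fun h => hij (h.1.symm.trans h.2)
      have e1 : ¬((1:Fin (p+q+2)) = i ∧ (1:Fin (p+q+2)) = j) :=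
        fun h => hij (h.1.symm.trans h.2)
      have e2 : ¬(nn = i ∧ nn = j) := fun h => hij (h.1.symm.trans h.2)
      have e3 : ¬(ll = i ∧ ll = j) := fun h => hij (h.1.symm.trans h.2)
      simp [hij, e0, e1, e2, e3]
  rw [hD]
  abel
end

section
/- Let p ≥ 1 and let 𝔫 ⊆ 𝔬(p+1,q+1) be a nilpotent Lie subalgebra such that every X ∈ 𝔫 satisfies X e_0 ∈ ℝ e_0 and X e_1 ∈ ℝ e_1 (i.e. 𝔫 fixes the two points [e_0] and [e_1] of the lightlike geodesic Λ = P(span{e_0, e_1})). Then the nilpotence degree of 𝔫 is at most 2p; that is, 𝔫_{2p} = 0. -/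
open Matrix

attribute [local instance 100] LieRing.ofAssociativeRing

/-- The Gram matrix of `Q^{p+1,q+1}` on `ℝ^{n+2}`, `n = p+q`. -/
noncomputable def JBig (p q : ℕ) : Matrix (Fin (p+q+2)) (Fin (p+q+2)) ℝ :=
  fun i j => if ((i:ℕ) + (j:ℕ) = p+q+1 ∧ ((i:ℕ) ≤ p ∨ q+1 ≤ (i:ℕ)))
      ∨ (i = j ∧ p+1 ≤ (i:ℕ) ∧ (i:ℕ) ≤ q) then 1 else 0

namespace TP

open LieModule Module

variable (p q : ℕ)

abbrev Euc := Fin (p+q+2) → ℂ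
abbrev MatR := Matrix (Fin (p+q+2)) (Fin (p+q+2)) ℝ
abbrev EndA := Module.End ℂ (Euc p q)

noncomputable def Kc : Matrix (Fin (p+q+2)) (Fin (p+q+2)) ℂ :=
  (JBig p q).map (algebraMap ℝ ℂ)

/-- entrywise complexification, as a ring hom -/
noncomputable def cmat : MatR p q →+* Matrix (Fin (p+q+2)) (Fin (p+q+2)) ℂ :=
  (algebraMap ℝ ℂ).mapMatrix

lemma cmat_apply (X : MatR p q) : cmat p q X = X.map (algebraMap ℝ ℂ) := rfl

noncomputable def toEndo (X : MatR p q) : EndA p q := Matrix.toLinAlgEquiv' (cmat p q X)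

lemma toEndo_apply (X : MatR p q) (v : Euc p q) :
    toEndo p q X v = (X.map (algebraMap ℝ ℂ)) *ᵥ v := rfl

noncomputable def Hf (u v : Euc p q) : ℂ := u ⬝ᵥ (Kc p q *ᵥ (star v))

/-- the "mirror" index pairing of the quadratic form -/
def mir (i : Fin (p+q+2)) : Fin (p+q+2) :=
  if (i:ℕ) ≤ p ∨ q+1 ≤ (i:ℕ) then ⟨p+q+1 - (i:ℕ), by omega⟩ else i

lemma Kc_apply (i j : Fin (p+q+2)) :
    Kc p q i j = if j = mir p q i then 1 else 0 := by
  have hi := i.isLt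
  have hj := j.isLt
  simp only [Kc, Matrix.map_apply, JBig]
  rw [apply_ite (algebraMap ℝ ℂ), _root_.map_one, _root_.map_zero]
  by_cases h : (i:ℕ) ≤ p ∨ q+1 ≤ (i:ℕ)
  · have hm : (mir p q i : ℕ) = p+q+1 - (i:ℕ) := by rw [mir, if_pos h]
    by_cases hjm : j = mir p q i
    · rw [if_pos hjm, if_pos]
      refine Or.inl ⟨?_, h⟩
      have : (j:ℕ) = p+q+1 - (i:ℕ) := by rw [hjm, hm]
      omega
    · rw [if_neg hjm, if_neg]
      rintro (⟨hsum, _⟩ | ⟨heq, hmid⟩)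
      · exact hjm (Fin.ext (by omega))
      · rcases hmid with ⟨h1, h2⟩
        rcases h with h | h <;> omega
  · have hm : mir p q i = i := by rw [mir, if_neg h]
    push_neg at h
    obtain ⟨h1, h2⟩ := h
    by_cases hjm : j = i
    · rw [hm, if_pos hjm, if_pos]
      exact Or.inr ⟨hjm.symm, by omega, by omega⟩
    · rw [hm, if_neg hjm, if_neg]
      rintro (⟨hsum, hcase⟩ | ⟨heq, _⟩)
      · rcases hcase with hc | hc <;> omega
      · exact hjm heq.symm

lemma Hf_apply (u v : Euc p q) :
    Hf p q u v = ∑ i, u i * star (v (mir p q i)) := by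
  unfold Hf dotProduct Matrix.mulVec
  refine Finset.sum_congr rfl (fun i _ => ?_)
  congr 1
  unfold dotProduct
  rw [Finset.sum_eq_single (mir p q i)]
  · simp [Kc_apply]
  · intro b _ hb; simp [Kc_apply, hb]
  · intro habs; exact absurd (Finset.mem_univ _) habs

lemma mir_invol (i : Fin (p+q+2)) : mir p q (mir p q i) = i := by
  have hi := i.isLt
  unfold mir
  by_cases h : (i:ℕ) ≤ p ∨ q+1 ≤ (i:ℕ)
  · rw [if_pos h, if_pos] <;> [skip; simp] <;> [skip; omega]
    apply Fin.ext; simp; omega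
  · rw [if_neg h, if_neg h]

-- basic (semi)linearity of Hf
lemma Hf_add_left (u u' v : Euc p q) : Hf p q (u + u') v = Hf p q u v + Hf p q u' v := by
  unfold Hf; rw [add_dotProduct]
lemma Hf_smul_left (c : ℂ) (u v : Euc p q) : Hf p q (c • u) v = c * Hf p q u v := by
  unfold Hf; rw [smul_dotProduct, smul_eq_mul]
lemma Hf_zero_left (v : Euc p q) : Hf p q 0 v = 0 := by
  unfold Hf; rw [zero_dotProduct]
lemma Hf_add_right (u v v' : Euc p q) : Hf p q u (v + v') = Hf p q u v + Hf p q u v' := by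
  unfold Hf; rw [star_add, Matrix.mulVec_add, dotProduct_add]
lemma Hf_smul_right (c : ℂ) (u v : Euc p q) : Hf p q u (c • v) = star c * Hf p q u v := by
  unfold Hf
  rw [star_smul, Matrix.mulVec_smul, dotProduct_smul, smul_eq_mul]
lemma Hf_zero_right (u : Euc p q) : Hf p q u 0 = 0 := by
  unfold Hf; rw [star_zero, Matrix.mulVec_zero, dotProduct_zero]
lemma Hf_sub_right (u v v' : Euc p q) : Hf p q u (v - v') = Hf p q u v - Hf p q u v' := by
  have := Hf_add_right p q u (v - v') v'
  rw [sub_add_cancel] at this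
  rw [eq_sub_iff_add_eq, ← this]
lemma Hf_sub_left (u u' v : Euc p q) : Hf p q (u - u') v = Hf p q u v - Hf p q u' v := by
  have := Hf_add_left p q (u - u') u' v
  rw [sub_add_cancel] at this
  rw [eq_sub_iff_add_eq, ← this]

lemma Hf_conj_symm (u v : Euc p q) : Hf p q v u = star (Hf p q u v) := by
  rw [Hf_apply, Hf_apply, star_sum]
  have hbij : Function.Bijective (mir p q) :=
    Function.Involutive.bijective (mir_invol p q)
  rw [← Function.Bijective.sum_comp hbij (fun i => v i * star (u (mir p q i)))]
  refine Finset.sum_congr rfl (fun i _ => ?_)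
  rw [star_mul', star_star, mir_invol]
  ring

lemma star_mulVec_real (X : MatR p q) (v : Euc p q) :
    star ((X.map (algebraMap ℝ ℂ)) *ᵥ v) = (X.map (algebraMap ℝ ℂ)) *ᵥ (star v) := by
  funext j
  show star (∑ k, (X.map (algebraMap ℝ ℂ)) j k * v k) = ∑ k, (X.map (algebraMap ℝ ℂ)) j k * star (v k)
  rw [star_sum]
  refine Finset.sum_congr rfl (fun k _ => ?_)
  rw [star_mul']
  congr 1
  simp [Matrix.map_apply, Complex.star_def, Complex.conj_ofReal]

lemma Kc_rel {X : MatR p q} (hX : Xᵀ * JBig p q + JBig p q * X = 0) :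
    (X.map (algebraMap ℝ ℂ))ᵀ * Kc p q + Kc p q * (X.map (algebraMap ℝ ℂ)) = 0 := by
  have h := congrArg (cmat p q) hX
  rw [_root_.map_add, _root_.map_mul, _root_.map_mul, _root_.map_zero] at h
  have ht : cmat p q Xᵀ = (X.map (algebraMap ℝ ℂ))ᵀ := by
    rw [cmat_apply, Matrix.transpose_map]
  rw [ht, cmat_apply, cmat_apply] at h
  exact h

lemma Hf_skew {X : MatR p q} (hX : Xᵀ * JBig p q + JBig p q * X = 0) (u v : Euc p q) :
    Hf p q (toEndo p q X u) v = - Hf p q u (toEndo p q X v) := by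
  set A := X.map (algebraMap ℝ ℂ) with hA
  have h1 : u ⬝ᵥ ((Aᵀ * Kc p q) *ᵥ star v) = (A *ᵥ u) ⬝ᵥ (Kc p q *ᵥ star v) := by
    rw [← Matrix.mulVec_mulVec, Matrix.dotProduct_mulVec, Matrix.vecMul_transpose]
  have h2 : Aᵀ * Kc p q = -(Kc p q * A) := eq_neg_of_add_eq_zero_left (Kc_rel p q hX)
  show (A *ᵥ u) ⬝ᵥ (Kc p q *ᵥ star v) = - (u ⬝ᵥ (Kc p q *ᵥ star (A *ᵥ v)))
  rw [← h1, h2, Matrix.neg_mulVec, dotProduct_neg, ← Matrix.mulVec_mulVec,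
    star_mulVec_real]

-- distinguished isotropic vectors
noncomputable def e0c : Euc p q := Pi.single 0 1
noncomputable def e1c : Euc p q := Pi.single 1 1

lemma Hf_single_single (a b : Fin (p+q+2)) :
    Hf p q (Pi.single a 1) (Pi.single b 1) = if mir p q a = b then 1 else 0 := by
  rw [Hf_apply, Finset.sum_eq_single a]
  · rw [Pi.single_eq_same, one_mul, Pi.single_apply]
    simp [apply_ite (star : ℂ → ℂ)]
  · intro i _ hi
    rw [Pi.single_eq_of_ne hi, zero_mul]
  · intro h; exact absurd (Finset.mem_univ _) h

section Main

variable (N : LieSubalgebra ℝ (MatR p q))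

lemma toEndo_bracket (X Y : MatR p q) :
    toEndo p q ⁅X, Y⁆ = ⁅toEndo p q X, toEndo p q Y⁆ := by
  unfold toEndo
  simp only [Ring.lie_def, _root_.map_sub, _root_.map_mul]

/-- The complex span of the image of `N` in `End(ℂ^{n+2})`, as a complex Lie subalgebra. -/
noncomputable def L' : LieSubalgebra ℂ (EndA p q) where
  toSubmodule := Submodule.span ℂ (toEndo p q '' (N : Set (MatR p q)))
  lie_mem' := by
    intro a b ha hb
    induction ha using Submodule.span_induction with
    | mem a hA =>
      induction hb using Submodule.span_induction with
      | mem b hB =>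
        obtain ⟨X, hX, rfl⟩ := hA
        obtain ⟨Y, hY, rfl⟩ := hB
        apply Submodule.subset_span
        exact ⟨⁅X, Y⁆, N.lie_mem hX hY, toEndo_bracket p q X Y⟩
      | zero => rw [lie_zero]; exact Submodule.zero_mem _
      | add x y hx hy ihx ihy => rw [lie_add]; exact Submodule.add_mem _ ihx ihy
      | smul c x hx ihx => rw [lie_smul]; exact Submodule.smul_mem _ _ ihx
    | zero => rw [zero_lie]; exact Submodule.zero_mem _
    | add x y hx hy ihx ihy => rw [add_lie]; exact Submodule.add_mem _ ihx ihy
    | smul c x hx ihx => rw [smul_lie]; exact Submodule.smul_mem _ _ ihx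

lemma mem_L'_of_mem {X : MatR p q} (hX : X ∈ N) : toEndo p q X ∈ L' p q N :=
  Submodule.subset_span ⟨X, hX, rfl⟩

/-- the image of an element of `N` in `L'` -/
noncomputable def el (x : N) : L' p q N := ⟨toEndo p q (x : MatR p q), mem_L'_of_mem p q N x.2⟩

lemma lie_eq_apply (x : L' p q N) (v : Euc p q) :
    ⁅x, v⁆ = ((x : EndA p q) : Euc p q →ₗ[ℂ] Euc p q) v := rfl

lemma toEnd_eq (x : L' p q N) :
    LieModule.toEnd ℂ (L' p q N) (Euc p q) x = (x : EndA p q) := by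
  ext v; rfl


-- eigenvalue functions of the fixed lines
noncomputable def ev0 (x : N) : ℂ := toEndo p q (x : MatR p q) (e0c p q) 0
noncomputable def ev1 (x : N) : ℂ := toEndo p q (x : MatR p q) (e1c p q) 1

lemma eigen0 (hfix0 : ∀ X ∈ N, ∃ c : ℝ, X *ᵥ (Pi.single 0 1 : Fin (p+q+2) → ℝ)
      = c • (Pi.single 0 1 : Fin (p+q+2) → ℝ)) (x : N) :
    toEndo p q (x : MatR p q) (e0c p q) = ev0 p q N x • e0c p q := by
  obtain ⟨c, hc⟩ := hfix0 x x.2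
  have key : toEndo p q (x : MatR p q) (e0c p q) = ((c:ℂ)) • e0c p q := by
    funext i
    have hcc := congrFun hc i
    simp only [Matrix.mulVec_single, mul_one, Pi.smul_apply, smul_eq_mul, MulOpposite.op_one, one_smul, Matrix.col_apply] at hcc
    show (((x : MatR p q).map (algebraMap ℝ ℂ)) *ᵥ (Pi.single 0 1)) i = _
    rw [Matrix.mulVec_single]
    simp only [Matrix.map_apply, mul_one, Pi.smul_apply, smul_eq_mul, e0c, MulOpposite.op_one, one_smul, Matrix.col_apply]
    rw [hcc]
    rw [_root_.map_mul]
    have h1 : (algebraMap ℝ ℂ) c = (c : ℂ) := by simp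
    rw [h1]
    congr 1
    rw [Pi.single_apply, Pi.single_apply, apply_ite (algebraMap ℝ ℂ), _root_.map_one,
      _root_.map_zero]
  have hev : ev0 p q N x = (c:ℂ) := by
    rw [ev0, key]
    simp [e0c, Pi.single_apply]
  rw [key, hev]

lemma eigen1 (hfix1 : ∀ X ∈ N, ∃ c : ℝ, X *ᵥ (Pi.single 1 1 : Fin (p+q+2) → ℝ)
      = c • (Pi.single 1 1 : Fin (p+q+2) → ℝ)) (x : N) :
    toEndo p q (x : MatR p q) (e1c p q) = ev1 p q N x • e1c p q := by
  obtain ⟨c, hc⟩ := hfix1 x x.2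
  have key : toEndo p q (x : MatR p q) (e1c p q) = ((c:ℂ)) • e1c p q := by
    funext i
    have hcc := congrFun hc i
    simp only [Matrix.mulVec_single, mul_one, Pi.smul_apply, smul_eq_mul, MulOpposite.op_one, one_smul, Matrix.col_apply] at hcc
    show (((x : MatR p q).map (algebraMap ℝ ℂ)) *ᵥ (Pi.single 1 1)) i = _
    rw [Matrix.mulVec_single]
    simp only [Matrix.map_apply, mul_one, Pi.smul_apply, smul_eq_mul, e1c, MulOpposite.op_one, one_smul, Matrix.col_apply]
    rw [hcc]
    rw [_root_.map_mul]
    have h1 : (algebraMap ℝ ℂ) c = (c : ℂ) := by simp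
    rw [h1]
    congr 1
    rw [Pi.single_apply, Pi.single_apply, apply_ite (algebraMap ℝ ℂ), _root_.map_one,
      _root_.map_zero]
  have hev : ev1 p q N x = (c:ℂ) := by
    rw [ev1, key]
    simp [e1c, Pi.single_apply]
  rw [key, hev]

section Weighted

variable [LieRing.IsNilpotent (L' p q N)] (χ : L' p q N → ℂ)

noncomputable def Vchi : Submodule ℂ (Euc p q) :=
  (genWeightSpace (Euc p q) χ : LieSubmodule ℂ (L' p q N) (Euc p q))

lemma mem_Vchi_iff (v : Euc p q) :
    v ∈ Vchi p q N χ ↔ ∀ y : L' p q N,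
      ∃ k : ℕ, (((y : EndA p q) - χ y • (1 : EndA p q))^k) v = 0 := by
  rw [Vchi]
  rw [LieSubmodule.mem_toSubmodule, mem_genWeightSpace]
  refine forall_congr' (fun y => ?_)
  rw [toEnd_eq]

lemma Vchi_stable (y : L' p q N) {v : Euc p q} (hv : v ∈ Vchi p q N χ) :
    (y : EndA p q) v ∈ Vchi p q N χ :=
  (genWeightSpace (Euc p q) χ).lie_mem hv

noncomputable def stepS (S : Submodule ℂ (Euc p q)) : Submodule ℂ (Euc p q) :=
  Submodule.span ℂ {u : Euc p q |
    ∃ x : N, ∃ v ∈ S, u = toEndo p q (x : MatR p q) v - χ (el p q N x) • v}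

lemma mem_stepS (x : N) {v : Euc p q} {S : Submodule ℂ (Euc p q)} (hv : v ∈ S) :
    toEndo p q (x : MatR p q) v - χ (el p q N x) • v ∈ stepS p q N χ S :=
  Submodule.subset_span ⟨x, v, hv, rfl⟩

lemma stepS_mono {S T : Submodule ℂ (Euc p q)} (h : S ≤ T) :
    stepS p q N χ S ≤ stepS p q N χ T := by
  apply Submodule.span_mono
  rintro u ⟨x, v, hv, rfl⟩
  exact ⟨x, v, h hv, rfl⟩

lemma stepS_le {S T : Submodule ℂ (Euc p q)}
    (h : ∀ (x : N), ∀ v ∈ S, toEndo p q (x : MatR p q) v - χ (el p q N x) • v ∈ T) :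
    stepS p q N χ S ≤ T := by
  rw [stepS, Submodule.span_le]
  rintro u ⟨x, v, hv, rfl⟩
  exact h x v hv

noncomputable def Fc : ℕ → Submodule ℂ (Euc p q)
  | 0 => Vchi p q N χ
  | (j+1) => stepS p q N χ (Fc j)

lemma stepS_le_V {S : Submodule ℂ (Euc p q)} (hS : S ≤ Vchi p q N χ) :
    stepS p q N χ S ≤ Vchi p q N χ := by
  apply stepS_le
  intro x v hv
  exact sub_mem (Vchi_stable p q N χ (el p q N x) (hS hv))
    (Submodule.smul_mem _ _ (hS hv))

lemma Fc_le_V : ∀ j, Fc p q N χ j ≤ Vchi p q N χ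
  | 0 => le_rfl
  | (j+1) => stepS_le_V p q N χ (Fc_le_V j)

lemma Fc_succ_le : ∀ j, Fc p q N χ (j+1) ≤ Fc p q N χ j
  | 0 => stepS_le_V p q N χ le_rfl
  | (j+1) => stepS_mono p q N χ (Fc_succ_le j)

lemma Fc_antitone {j k : ℕ} (h : j ≤ k) : Fc p q N χ k ≤ Fc p q N χ j := by
  induction k with
  | zero => cases Nat.le_zero.mp h; exact le_rfl
  | succ k ih =>
    rcases Nat.lt_or_ge j (k+1) with hlt | hge
    · exact (Fc_succ_le p q N χ k).trans (ih (Nat.lt_succ_iff.mp hlt))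
    · cases le_antisymm h hge; exact le_rfl

noncomputable def perpE : Submodule ℂ (Euc p q) where
  carrier := {v | Hf p q (e0c p q) v = 0 ∧ Hf p q (e1c p q) v = 0}
  add_mem' := by
    rintro a b ⟨ha0, ha1⟩ ⟨hb0, hb1⟩
    refine ⟨?_, ?_⟩ <;> rw [Hf_add_right]
    · rw [ha0, hb0, add_zero]
    · rw [ha1, hb1, add_zero]
  zero_mem' := ⟨Hf_zero_right p q _, Hf_zero_right p q _⟩
  smul_mem' := by
    rintro c v ⟨h0, h1⟩
    refine ⟨?_, ?_⟩ <;> rw [Hf_smul_right]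
    · rw [h0, mul_zero]
    · rw [h1, mul_zero]

lemma mem_perpE {v : Euc p q} :
    v ∈ perpE p q ↔ Hf p q (e0c p q) v = 0 ∧ Hf p q (e1c p q) v = 0 := Iff.rfl

noncomputable def W0 : Submodule ℂ (Euc p q) := Vchi p q N χ ⊓ perpE p q

noncomputable def Gc : ℕ → Submodule ℂ (Euc p q)
  | 0 => W0 p q N χ
  | (j+1) => stepS p q N χ (Gc j)

noncomputable def E2 : Submodule ℂ (Euc p q) := Submodule.span ℂ {e0c p q, e1c p q}

noncomputable def Zc : Submodule ℂ (Euc p q) := Vchi p q N χ ⊓ E2 p q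

-- twisting identities for the pairing against e₀, e₁
lemma Hf_e0_twist (hso : ∀ X ∈ N, Xᵀ * JBig p q + JBig p q * X = 0)
    (hfix0 : ∀ X ∈ N, ∃ c : ℝ, X *ᵥ (Pi.single 0 1 : Fin (p+q+2) → ℝ)
      = c • (Pi.single 0 1 : Fin (p+q+2) → ℝ))
    (x : N) (c : ℂ) (v : Euc p q) :
    Hf p q (e0c p q) (toEndo p q (x : MatR p q) v - c • v)
      = -(ev0 p q N x + star c) * Hf p q (e0c p q) v := by
  rw [Hf_sub_right, Hf_smul_right]
  have hskew := Hf_skew p q (hso (x : MatR p q) x.2) (e0c p q) v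
  have : Hf p q (e0c p q) (toEndo p q (x : MatR p q) v)
      = - Hf p q (toEndo p q (x : MatR p q) (e0c p q)) v := by
    rw [hskew, neg_neg]
  rw [this, eigen0 p q N hfix0 x, Hf_smul_left]
  ring

lemma Hf_e1_twist (hso : ∀ X ∈ N, Xᵀ * JBig p q + JBig p q * X = 0)
    (hfix1 : ∀ X ∈ N, ∃ c : ℝ, X *ᵥ (Pi.single 1 1 : Fin (p+q+2) → ℝ)
      = c • (Pi.single 1 1 : Fin (p+q+2) → ℝ))
    (x : N) (c : ℂ) (v : Euc p q) :
    Hf p q (e1c p q) (toEndo p q (x : MatR p q) v - c • v)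
      = -(ev1 p q N x + star c) * Hf p q (e1c p q) v := by
  rw [Hf_sub_right, Hf_smul_right]
  have hskew := Hf_skew p q (hso (x : MatR p q) x.2) (e1c p q) v
  have : Hf p q (e1c p q) (toEndo p q (x : MatR p q) v)
      = - Hf p q (toEndo p q (x : MatR p q) (e1c p q)) v := by
    rw [hskew, neg_neg]
  rw [this, eigen1 p q N hfix1 x, Hf_smul_left]
  ring

lemma stepS_le_W0
    (hso : ∀ X ∈ N, Xᵀ * JBig p q + JBig p q * X = 0)
    (hfix0 : ∀ X ∈ N, ∃ c : ℝ, X *ᵥ (Pi.single 0 1 : Fin (p+q+2) → ℝ)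
      = c • (Pi.single 0 1 : Fin (p+q+2) → ℝ))
    (hfix1 : ∀ X ∈ N, ∃ c : ℝ, X *ᵥ (Pi.single 1 1 : Fin (p+q+2) → ℝ)
      = c • (Pi.single 1 1 : Fin (p+q+2) → ℝ))
    {S : Submodule ℂ (Euc p q)} (hS : S ≤ W0 p q N χ) :
    stepS p q N χ S ≤ W0 p q N χ := by
  apply stepS_le
  intro x v hv
  obtain ⟨hvV, hv0, hv1⟩ := hS hv
  refine ⟨sub_mem (Vchi_stable p q N χ (el p q N x) hvV)
    (Submodule.smul_mem _ _ hvV), ?_, ?_⟩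
  · rw [Hf_e0_twist p q N hso hfix0, hv0, mul_zero]
  · rw [Hf_e1_twist p q N hso hfix1, hv1, mul_zero]

lemma Gc_le_W0
    (hso : ∀ X ∈ N, Xᵀ * JBig p q + JBig p q * X = 0)
    (hfix0 : ∀ X ∈ N, ∃ c : ℝ, X *ᵥ (Pi.single 0 1 : Fin (p+q+2) → ℝ)
      = c • (Pi.single 0 1 : Fin (p+q+2) → ℝ))
    (hfix1 : ∀ X ∈ N, ∃ c : ℝ, X *ᵥ (Pi.single 1 1 : Fin (p+q+2) → ℝ)
      = c • (Pi.single 1 1 : Fin (p+q+2) → ℝ)) :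
    ∀ j, Gc p q N χ j ≤ W0 p q N χ
  | 0 => le_rfl
  | (j+1) => stepS_le_W0 p q N χ hso hfix0 hfix1 (Gc_le_W0 hso hfix0 hfix1 j)

lemma Gc_succ_le
    (hso : ∀ X ∈ N, Xᵀ * JBig p q + JBig p q * X = 0)
    (hfix0 : ∀ X ∈ N, ∃ c : ℝ, X *ᵥ (Pi.single 0 1 : Fin (p+q+2) → ℝ)
      = c • (Pi.single 0 1 : Fin (p+q+2) → ℝ))
    (hfix1 : ∀ X ∈ N, ∃ c : ℝ, X *ᵥ (Pi.single 1 1 : Fin (p+q+2) → ℝ)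
      = c • (Pi.single 1 1 : Fin (p+q+2) → ℝ)) :
    ∀ j, Gc p q N χ (j+1) ≤ Gc p q N χ j
  | 0 => stepS_le_W0 p q N χ hso hfix0 hfix1 le_rfl
  | (j+1) => stepS_mono p q N χ (Gc_succ_le hso hfix0 hfix1 j)

lemma Gc_antitone
    (hso : ∀ X ∈ N, Xᵀ * JBig p q + JBig p q * X = 0)
    (hfix0 : ∀ X ∈ N, ∃ c : ℝ, X *ᵥ (Pi.single 0 1 : Fin (p+q+2) → ℝ)
      = c • (Pi.single 0 1 : Fin (p+q+2) → ℝ))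
    (hfix1 : ∀ X ∈ N, ∃ c : ℝ, X *ᵥ (Pi.single 1 1 : Fin (p+q+2) → ℝ)
      = c • (Pi.single 1 1 : Fin (p+q+2) → ℝ))
    {j k : ℕ} (h : j ≤ k) : Gc p q N χ k ≤ Gc p q N χ j := by
  induction k with
  | zero => cases Nat.le_zero.mp h; exact le_rfl
  | succ k ih =>
    rcases Nat.lt_or_ge j (k+1) with hlt | hge
    · exact (Gc_succ_le p q N χ hso hfix0 hfix1 k).trans (ih (Nat.lt_succ_iff.mp hlt))
    · cases le_antisymm h hge; exact le_rfl

lemma orthE0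
    (hso : ∀ X ∈ N, Xᵀ * JBig p q + JBig p q * X = 0)
    (hfix0 : ∀ X ∈ N, ∃ c : ℝ, X *ᵥ (Pi.single 0 1 : Fin (p+q+2) → ℝ)
      = c • (Pi.single 0 1 : Fin (p+q+2) → ℝ))
    (x₀ : N) (h0 : ev0 p q N x₀ + star (χ (el p q N x₀)) ≠ 0) :
    ∀ v ∈ Vchi p q N χ, Hf p q (e0c p q) v = 0 := by
  suffices H : ∀ (k : ℕ) (v : Euc p q),
      (((el p q N x₀ : EndA p q) - χ (el p q N x₀) • (1 : EndA p q))^k) v = 0 →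
      Hf p q (e0c p q) v = 0 by
    intro v hv
    obtain ⟨k, hk⟩ := (mem_Vchi_iff p q N χ v).mp hv (el p q N x₀)
    exact H k v hk
  intro k
  induction k with
  | zero =>
    intro v hk
    rw [pow_zero, Module.End.one_apply] at hk
    rw [hk, Hf_zero_right]
  | succ k ih =>
    intro v hk
    rw [pow_succ, Module.End.mul_apply] at hk
    have ihv := ih _ hk
    have hexp : ((el p q N x₀ : EndA p q) - χ (el p q N x₀) • (1 : EndA p q)) v
        = toEndo p q ((x₀ : N) : MatR p q) v - χ (el p q N x₀) • v := by
      simp [el, LinearMap.sub_apply, LinearMap.smul_apply, Module.End.one_apply]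
    rw [hexp, Hf_e0_twist p q N hso hfix0] at ihv
    rcases mul_eq_zero.mp ihv with hc | hv0
    · exact absurd (neg_eq_zero.mp hc) h0
    · exact hv0

lemma orthE1
    (hso : ∀ X ∈ N, Xᵀ * JBig p q + JBig p q * X = 0)
    (hfix1 : ∀ X ∈ N, ∃ c : ℝ, X *ᵥ (Pi.single 1 1 : Fin (p+q+2) → ℝ)
      = c • (Pi.single 1 1 : Fin (p+q+2) → ℝ))
    (x₀ : N) (h0 : ev1 p q N x₀ + star (χ (el p q N x₀)) ≠ 0) :
    ∀ v ∈ Vchi p q N χ, Hf p q (e1c p q) v = 0 := by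
  suffices H : ∀ (k : ℕ) (v : Euc p q),
      (((el p q N x₀ : EndA p q) - χ (el p q N x₀) • (1 : EndA p q))^k) v = 0 →
      Hf p q (e1c p q) v = 0 by
    intro v hv
    obtain ⟨k, hk⟩ := (mem_Vchi_iff p q N χ v).mp hv (el p q N x₀)
    exact H k v hk
  intro k
  induction k with
  | zero =>
    intro v hk
    rw [pow_zero, Module.End.one_apply] at hk
    rw [hk, Hf_zero_right]
  | succ k ih =>
    intro v hk
    rw [pow_succ, Module.End.mul_apply] at hk
    have ihv := ih _ hk
    have hexp : ((el p q N x₀ : EndA p q) - χ (el p q N x₀) • (1 : EndA p q)) v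
        = toEndo p q ((x₀ : N) : MatR p q) v - χ (el p q N x₀) • v := by
      simp [el, LinearMap.sub_apply, LinearMap.smul_apply, Module.End.one_apply]
    rw [hexp, Hf_e1_twist p q N hso hfix1] at ihv
    rcases mul_eq_zero.mp ihv with hc | hv0
    · exact absurd (neg_eq_zero.mp hc) h0
    · exact hv0

lemma Fc_one_le_W0
    (hso : ∀ X ∈ N, Xᵀ * JBig p q + JBig p q * X = 0)
    (hfix0 : ∀ X ∈ N, ∃ c : ℝ, X *ᵥ (Pi.single 0 1 : Fin (p+q+2) → ℝ)
      = c • (Pi.single 0 1 : Fin (p+q+2) → ℝ))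
    (hfix1 : ∀ X ∈ N, ∃ c : ℝ, X *ᵥ (Pi.single 1 1 : Fin (p+q+2) → ℝ)
      = c • (Pi.single 1 1 : Fin (p+q+2) → ℝ)) :
    Fc p q N χ 1 ≤ W0 p q N χ := by
  apply stepS_le
  intro x v hv
  refine ⟨sub_mem (Vchi_stable p q N χ (el p q N x) hv)
    (Submodule.smul_mem _ _ hv), ?_, ?_⟩
  · rw [Hf_e0_twist p q N hso hfix0]
    by_cases hall : ∀ x' : N, ev0 p q N x' + star (χ (el p q N x')) = 0
    · rw [hall x, neg_zero, zero_mul]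
    · push_neg at hall
      obtain ⟨x₀, h0⟩ := hall
      rw [orthE0 p q N χ hso hfix0 x₀ h0 v hv, mul_zero]
  · rw [Hf_e1_twist p q N hso hfix1]
    by_cases hall : ∀ x' : N, ev1 p q N x' + star (χ (el p q N x')) = 0
    · rw [hall x, neg_zero, zero_mul]
    · push_neg at hall
      obtain ⟨x₀, h0⟩ := hall
      rw [orthE1 p q N χ hso hfix1 x₀ h0 v hv, mul_zero]

lemma Fc_succ_le_G
    (hso : ∀ X ∈ N, Xᵀ * JBig p q + JBig p q * X = 0)
    (hfix0 : ∀ X ∈ N, ∃ c : ℝ, X *ᵥ (Pi.single 0 1 : Fin (p+q+2) → ℝ)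
      = c • (Pi.single 0 1 : Fin (p+q+2) → ℝ))
    (hfix1 : ∀ X ∈ N, ∃ c : ℝ, X *ᵥ (Pi.single 1 1 : Fin (p+q+2) → ℝ)
      = c • (Pi.single 1 1 : Fin (p+q+2) → ℝ)) :
    ∀ j, Fc p q N χ (j+1) ≤ Gc p q N χ j
  | 0 => Fc_one_le_W0 p q N χ hso hfix0 hfix1
  | (j+1) => stepS_mono p q N χ (Fc_succ_le_G hso hfix0 hfix1 j)

end Weighted

lemma Tapply (x : N) (c : ℂ) (v : Euc p q) :
    (toEndo p q (x : MatR p q) - c • (1 : EndA p q)) v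
      = toEndo p q (x : MatR p q) v - c • v := by
  simp [LinearMap.sub_apply, LinearMap.smul_apply, Module.End.one_apply]

lemma Tact
    (hfix0 : ∀ X ∈ N, ∃ c : ℝ, X *ᵥ (Pi.single 0 1 : Fin (p+q+2) → ℝ)
      = c • (Pi.single 0 1 : Fin (p+q+2) → ℝ))
    (hfix1 : ∀ X ∈ N, ∃ c : ℝ, X *ᵥ (Pi.single 1 1 : Fin (p+q+2) → ℝ)
      = c • (Pi.single 1 1 : Fin (p+q+2) → ℝ))
    (x : N) (c a b : ℂ) :
    (toEndo p q (x : MatR p q) - c • (1 : EndA p q)) (a • e0c p q + b • e1c p q)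
      = (a * (ev0 p q N x - c)) • e0c p q + (b * (ev1 p q N x - c)) • e1c p q := by
  rw [Tapply, map_add, _root_.map_smul, _root_.map_smul, eigen0 p q N hfix0 x,
    eigen1 p q N hfix1 x]
  module

lemma Tpow
    (hfix0 : ∀ X ∈ N, ∃ c : ℝ, X *ᵥ (Pi.single 0 1 : Fin (p+q+2) → ℝ)
      = c • (Pi.single 0 1 : Fin (p+q+2) → ℝ))
    (hfix1 : ∀ X ∈ N, ∃ c : ℝ, X *ᵥ (Pi.single 1 1 : Fin (p+q+2) → ℝ)
      = c • (Pi.single 1 1 : Fin (p+q+2) → ℝ))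
    (x : N) (c a b : ℂ) : ∀ k : ℕ,
    (((toEndo p q (x : MatR p q) - c • (1 : EndA p q)))^k) (a • e0c p q + b • e1c p q)
      = (a * (ev0 p q N x - c)^k) • e0c p q + (b * (ev1 p q N x - c)^k) • e1c p q
  | 0 => by simp
  | (k+1) => by
    rw [pow_succ, Module.End.mul_apply, Tact p q N hfix0 hfix1 x c a b,
      Tpow hfix0 hfix1 x c (a * (ev0 p q N x - c)) (b * (ev1 p q N x - c)) k]
    congr 1
    · congr 1
      ring
    · congr 1
      ring

lemma mir_val (i : Fin (p+q+2)) :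
    (mir p q i : ℕ) = if (i:ℕ) ≤ p ∨ q+1 ≤ (i:ℕ) then p+q+1 - (i:ℕ) else (i:ℕ) := by
  unfold mir
  split_ifs with h
  · simp
  · rfl

lemma val_zero' : ((0 : Fin (p+q+2)) : ℕ) = 0 := rfl

lemma val_one' : ((1 : Fin (p+q+2)) : ℕ) = 1 := Fin.val_one (p+q)

lemma Hf_e00 (hpq : p ≤ q) : Hf p q (e0c p q) (e0c p q) = 0 := by
  rw [e0c, Hf_single_single, if_neg]
  intro hc
  have := congrArg Fin.val hc
  rw [mir_val, val_zero'] at this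
  simp at this

lemma Hf_e01 (hp : 1 ≤ p) (hpq : p ≤ q) : Hf p q (e0c p q) (e1c p q) = 0 := by
  rw [e0c, e1c, Hf_single_single, if_neg]
  intro hc
  have := congrArg Fin.val hc
  rw [mir_val, val_zero', val_one'] at this
  simp at this
  omega

lemma Hf_e10 (hp : 1 ≤ p) (hpq : p ≤ q) : Hf p q (e1c p q) (e0c p q) = 0 := by
  rw [e0c, e1c, Hf_single_single, if_neg]
  intro hc
  have := congrArg Fin.val hc
  rw [mir_val, val_zero', val_one'] at this
  have hcond : (1:ℕ) ≤ p ∨ q+1 ≤ 1 := Or.inl hp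
  rw [if_pos hcond] at this
  omega

lemma Hf_e11 (hp : 1 ≤ p) (hpq : p ≤ q) : Hf p q (e1c p q) (e1c p q) = 0 := by
  rw [e1c, Hf_single_single, if_neg]
  intro hc
  have := congrArg Fin.val hc
  rw [mir_val, val_one'] at this
  have hcond : (1:ℕ) ≤ p ∨ q+1 ≤ 1 := Or.inl hp
  rw [if_pos hcond] at this
  omega

noncomputable def Phi (hpq : p ≤ q) : (Fin (q+1) → ℂ) →ₗ[ℂ] Euc p q where
  toFun c := fun i => if h : (i:ℕ) ≤ q then c ⟨(i:ℕ), by omega⟩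
    else c ⟨p+q+1 - (i:ℕ), by omega⟩
  map_add' c d := by
    funext i
    by_cases h : (i:ℕ) ≤ q <;> simp [h]
  map_smul' r c := by
    funext i
    by_cases h : (i:ℕ) ≤ q <;> simp [h]

lemma Phi_apply (hpq : p ≤ q) (c : Fin (q+1) → ℂ) (i : Fin (p+q+2)) :
    Phi p q hpq c i = if h : (i:ℕ) ≤ q then c ⟨(i:ℕ), by omega⟩
      else c ⟨p+q+1 - (i:ℕ), by omega⟩ := rfl

lemma Phi_mir (hpq : p ≤ q) (c : Fin (q+1) → ℂ) (i : Fin (p+q+2)) :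
    Phi p q hpq c (mir p q i) = Phi p q hpq c i := by
  have hi := i.isLt
  rw [Phi_apply, Phi_apply]
  have hmv := mir_val p q i
  by_cases h : (i:ℕ) ≤ p ∨ q+1 ≤ (i:ℕ)
  · rw [if_pos h] at hmv
    rcases h with h | h
    · rw [dif_neg (by omega), dif_pos (by omega)]
      congr 1
      apply Fin.ext
      simp [hmv]
      omega
    · rw [dif_pos (by omega), dif_neg (by omega)]
      congr 1
      apply Fin.ext
      simp [hmv]
  · rw [if_neg h] at hmv
    push_neg at h
    rw [dif_pos (by omega), dif_pos (by omega)]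
    congr 1
    apply Fin.ext
    simp [hmv]

lemma Phi_inj (hpq : p ≤ q) : Function.Injective (Phi p q hpq) := by
  intro c d h
  funext j
  have hj := j.isLt
  have hco := congrFun h (⟨(j:ℕ), by omega⟩ : Fin (p+q+2))
  have hcond : ((⟨(j:ℕ), by omega⟩ : Fin (p+q+2)) : ℕ) ≤ q := by simp; omega
  rw [Phi_apply, Phi_apply, dif_pos hcond, dif_pos hcond] at hco
  convert hco using 2 <;> (apply Fin.ext; simp)


lemma Phi_self (hpq : p ≤ q) (c : Fin (q+1) → ℂ) :
    Hf p q (Phi p q hpq c) (Phi p q hpq c)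
      = ((∑ i, Complex.normSq (Phi p q hpq c i) : ℝ) : ℂ) := by
  rw [Hf_apply, Complex.ofReal_sum]
  refine Finset.sum_congr rfl fun i _ => ?_
  rw [Phi_mir]
  rw [Complex.star_def, Complex.mul_conj]

lemma Phi_zero_of_iso (hpq : p ≤ q) (c : Fin (q+1) → ℂ)
    (h : Hf p q (Phi p q hpq c) (Phi p q hpq c) = 0) : Phi p q hpq c = 0 := by
  rw [Phi_self] at h
  have hre : (∑ i, Complex.normSq (Phi p q hpq c i) : ℝ) = 0 := by exact_mod_cast h
  funext i
  have hnn : ∀ i ∈ (Finset.univ : Finset (Fin (p+q+2))), 0 ≤ Complex.normSq (Phi p q hpq c i) :=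
    fun i _ => Complex.normSq_nonneg _
  have := (Finset.sum_eq_zero_iff_of_nonneg hnn).mp hre i (Finset.mem_univ i)
  exact Complex.normSq_eq_zero.mp this

lemma iso_bound (hpq : p ≤ q) (S : Submodule ℂ (Euc p q))
    (hS : ∀ u ∈ S, ∀ v ∈ S, Hf p q u v = 0) :
    finrank ℂ S ≤ p + 1 := by
  set R := LinearMap.range (Phi p q hpq) with hR
  have hdisj : S ⊓ R = ⊥ := by
    rw [eq_bot_iff]
    rintro v ⟨hvS, c, rfl⟩
    rw [Submodule.mem_bot]
    exact Phi_zero_of_iso p q hpq c (hS _ hvS _ hvS)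
  have hRrank : finrank ℂ R = q + 1 := by
    rw [hR, LinearMap.finrank_range_of_inj (Phi_inj p q hpq)]
    simp
  have hsum := Submodule.finrank_sup_add_finrank_inf_eq S R
  rw [hdisj, hRrank] at hsum
  have hle : finrank ℂ (S ⊔ R : Submodule ℂ (Euc p q)) ≤ finrank ℂ (Euc p q) :=
    Submodule.finrank_le _
  have htot : finrank ℂ (Euc p q) = p+q+2 := by
    simp [Euc]
  rw [htot] at hle
  have hbot : finrank ℂ (⊥ : Submodule ℂ (Euc p q)) = 0 := finrank_bot ℂ _
  omega

lemma e0c_ne_zero : e0c p q ≠ 0 := by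
  intro h
  have := congrFun h 0
  rw [e0c, Pi.single_eq_same] at this
  simp at this

lemma e1c_not_mem_span0 : e1c p q ∉ Submodule.span ℂ {e0c p q} := by
  intro h
  obtain ⟨a, ha⟩ := Submodule.mem_span_singleton.mp h
  have h1 := congrFun ha 1
  have h0 : e0c p q 1 = 0 := by
    rw [e0c, Pi.single_eq_of_ne]
    intro hc
    have := congrArg Fin.val hc
    rw [val_zero', val_one'] at this
    omega
  rw [Pi.smul_apply, h0, smul_zero] at h1
  have h2 : e1c p q 1 = 1 := Pi.single_eq_same 1 1
  rw [h2] at h1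
  simp at h1

lemma E2_rank : 2 ≤ finrank ℂ (E2 p q) := by
  have hlt : Submodule.span ℂ {e0c p q} < E2 p q := by
    refine lt_of_le_of_ne (Submodule.span_mono (by simp [Set.singleton_subset_iff])) ?_
    intro heq
    apply e1c_not_mem_span0 p q
    rw [heq]
    exact Submodule.subset_span (by simp)
  have := Submodule.finrank_lt_finrank_of_lt hlt
  rw [finrank_span_singleton (e0c_ne_zero p q)] at this
  omega

section Weighted2

variable [LieRing.IsNilpotent (L' p q N)] (χ : L' p q N → ℂ)

lemma EZkill
    (hfix0 : ∀ X ∈ N, ∃ c : ℝ, X *ᵥ (Pi.single 0 1 : Fin (p+q+2) → ℝ)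
      = c • (Pi.single 0 1 : Fin (p+q+2) → ℝ))
    (hfix1 : ∀ X ∈ N, ∃ c : ℝ, X *ᵥ (Pi.single 1 1 : Fin (p+q+2) → ℝ)
      = c • (Pi.single 1 1 : Fin (p+q+2) → ℝ)) :
    ∀ v ∈ Zc p q N χ, ∀ x : N,
      toEndo p q (x : MatR p q) v - χ (el p q N x) • v = 0 := by
  rintro v ⟨hvV, hvE⟩ x
  obtain ⟨a, b, rfl⟩ := Submodule.mem_span_pair.mp hvE
  have key0 : a * (ev0 p q N x - χ (el p q N x)) = 0 := by
    obtain ⟨k, hk⟩ := (mem_Vchi_iff p q N χ _).mp hvV (el p q N x)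
    have hk' : (((toEndo p q ((x : N) : MatR p q) - χ (el p q N x) • (1 : EndA p q)))^k)
        (a • e0c p q + b • e1c p q) = 0 := hk
    rw [Tpow p q N hfix0 hfix1 x _ a b k] at hk'
    have h0 := congrFun hk' 0
    have he00 : e0c p q 0 = 1 := Pi.single_eq_same 0 1
    have he10 : e1c p q 0 = 0 := by
      rw [e1c, Pi.single_eq_of_ne]
      intro hc
      have := congrArg Fin.val hc
      rw [Fin.val_zero, Fin.val_one] at this
      omega
    simp only [Pi.add_apply, Pi.smul_apply, smul_eq_mul, Pi.zero_apply, he00, he10,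
      mul_one, mul_zero, add_zero] at h0
    rcases mul_eq_zero.mp h0 with ha | hpow
    · rw [ha, zero_mul]
    · rcases pow_eq_zero_iff'.mp hpow with ⟨hz, _⟩
      rw [hz, mul_zero]
  have key1 : b * (ev1 p q N x - χ (el p q N x)) = 0 := by
    obtain ⟨k, hk⟩ := (mem_Vchi_iff p q N χ _).mp hvV (el p q N x)
    have hk' : (((toEndo p q ((x : N) : MatR p q) - χ (el p q N x) • (1 : EndA p q)))^k)
        (a • e0c p q + b • e1c p q) = 0 := hk
    rw [Tpow p q N hfix0 hfix1 x _ a b k] at hk'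
    have h1 := congrFun hk' 1
    have he01 : e0c p q 1 = 0 := by
      rw [e0c, Pi.single_eq_of_ne]
      intro hc
      have := congrArg Fin.val hc
      rw [Fin.val_zero, Fin.val_one] at this
      omega
    have he11 : e1c p q 1 = 1 := Pi.single_eq_same 1 1
    simp only [Pi.add_apply, Pi.smul_apply, smul_eq_mul, Pi.zero_apply, he01, he11,
      mul_one, mul_zero, zero_add] at h1
    rcases mul_eq_zero.mp h1 with hb | hpow
    · rw [hb, zero_mul]
    · rcases pow_eq_zero_iff'.mp hpow with ⟨hz, _⟩
      rw [hz, mul_zero]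
  have hmain := Tact p q N hfix0 hfix1 x (χ (el p q N x)) a b
  rw [Tapply] at hmain
  rw [hmain, key0, key1, zero_smul, zero_smul, add_zero]

lemma stepS_Zc
    (hfix0 : ∀ X ∈ N, ∃ c : ℝ, X *ᵥ (Pi.single 0 1 : Fin (p+q+2) → ℝ)
      = c • (Pi.single 0 1 : Fin (p+q+2) → ℝ))
    (hfix1 : ∀ X ∈ N, ∃ c : ℝ, X *ᵥ (Pi.single 1 1 : Fin (p+q+2) → ℝ)
      = c • (Pi.single 1 1 : Fin (p+q+2) → ℝ)) :
    stepS p q N χ (Zc p q N χ) ≤ ⊥ := by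
  apply stepS_le
  intro x v hv
  rw [Submodule.mem_bot]
  exact EZkill p q N χ hfix0 hfix1 v hv x

lemma G_le_Fc : ∀ j, Gc p q N χ j ≤ Fc p q N χ j
  | 0 => inf_le_left
  | (j+1) => stepS_mono p q N χ (G_le_Fc j)

lemma Fc_death : ∃ K, Fc p q N χ K = ⊥ := by
  letI : Bracket (L' p q N) ↥(shiftedGenWeightSpace ℂ (L' p q N) (Euc p q) χ) :=
    LieRingModule.toBracket
  obtain ⟨K, hK⟩ := (LieModule.isNilpotent_iff ℂ (L' p q N)
      ↥(shiftedGenWeightSpace ℂ (L' p q N) (Euc p q) χ)).mp inferInstance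
  refine ⟨K, le_bot_iff.mp ?_⟩
  have main : ∀ j, ∀ v ∈ Fc p q N χ j, ∃ hv : v ∈ genWeightSpace (Euc p q) χ,
      (⟨v, hv⟩ : ↥(shiftedGenWeightSpace ℂ (L' p q N) (Euc p q) χ)) ∈
        lowerCentralSeries ℂ (L' p q N) ↥(shiftedGenWeightSpace ℂ (L' p q N) (Euc p q) χ) j := by
    intro j
    induction j with
    | zero =>
      intro v hv
      exact ⟨Fc_le_V p q N χ 0 hv, LieSubmodule.mem_top _⟩
    | succ j ih =>
      intro v hv
      induction hv using Submodule.span_induction with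
      | mem u hgen =>
        obtain ⟨x, w, hw, rfl⟩ := hgen
        obtain ⟨hwV, hwmem⟩ := ih w hw
        set m : ↥(shiftedGenWeightSpace ℂ (L' p q N) (Euc p q) χ) := ⟨w, hwV⟩ with hm
        have hbr : ⁅el p q N x, m⁆ ∈ lowerCentralSeries ℂ (L' p q N)
            ↥(shiftedGenWeightSpace ℂ (L' p q N) (Euc p q) χ) (j+1) := by
          rw [LieModule.lowerCentralSeries_succ]
          exact LieSubmodule.lie_mem_lie (LieSubmodule.mem_top _) hwmem
        have hval : ((⁅el p q N x, m⁆ : ↥(shiftedGenWeightSpace ℂ (L' p q N) (Euc p q) χ)) : Euc p q)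
            = toEndo p q ((x : N) : MatR p q) w - χ (el p q N x) • w := by
          rw [shiftedGenWeightSpace.coe_lie_shiftedGenWeightSpace_apply]
          rfl
        refine ⟨hval ▸ (⁅el p q N x, m⁆ :
          ↥(shiftedGenWeightSpace ℂ (L' p q N) (Euc p q) χ)).2, ?_⟩
        convert hbr using 1
        exact Subtype.ext hval.symm
      | zero =>
        refine ⟨Submodule.zero_mem _, ?_⟩
        have h0 : (⟨(0 : Euc p q), Submodule.zero_mem _⟩ :
            ↥(shiftedGenWeightSpace ℂ (L' p q N) (Euc p q) χ)) = 0 := Subtype.ext rfl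
        rw [h0]
        exact zero_mem _
      | add u1 u2 h1 h2 ih1 ih2 =>
        obtain ⟨hv1, hm1⟩ := ih1
        obtain ⟨hv2, hm2⟩ := ih2
        refine ⟨Submodule.add_mem _ hv1 hv2, ?_⟩
        have hsum := add_mem hm1 hm2
        convert hsum using 1
        exact Subtype.ext rfl
      | smul c u hu ihu =>
        obtain ⟨hv1, hm1⟩ := ihu
        refine ⟨Submodule.smul_mem _ c hv1, ?_⟩
        have hs := SMulMemClass.smul_mem c hm1
        convert hs using 1
        exact Subtype.ext rfl
  intro v hv
  obtain ⟨hvV, hvmem⟩ := main K v hv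
  rw [hK] at hvmem
  have : (⟨v, hvV⟩ : ↥(shiftedGenWeightSpace ℂ (L' p q N) (Euc p q) χ)) = 0 :=
    (LieSubmodule.mem_bot _).mp hvmem
  have := congrArg Subtype.val this
  exact (Submodule.mem_bot ℂ).mpr this

lemma Hf_skew_twist (hso : ∀ X ∈ N, Xᵀ * JBig p q + JBig p q * X = 0)
    (x : N) (c : ℂ) (u v : Euc p q) :
    Hf p q (toEndo p q (x : MatR p q) u - c • u) v
      + Hf p q u (toEndo p q (x : MatR p q) v - c • v)
      = -(c + star c) * Hf p q u v := by
  rw [Hf_sub_left, Hf_sub_right, Hf_smul_left, Hf_smul_right,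
    Hf_skew p q (hso _ x.2)]
  ring

lemma nonself_orth (hso : ∀ X ∈ N, Xᵀ * JBig p q + JBig p q * X = 0)
    (x₀ : N) (h0 : χ (el p q N x₀) + star (χ (el p q N x₀)) ≠ 0) :
    ∀ u ∈ Vchi p q N χ, ∀ v ∈ Vchi p q N χ, Hf p q u v = 0 := by
  set c := χ (el p q N x₀) with hc
  set T : EndA p q := toEndo p q ((x₀ : N) : MatR p q) - c • (1 : EndA p q) with hT
  suffices H : ∀ (n ku kv : ℕ) (u v : Euc p q), ku + kv ≤ n →
      (T^ku) u = 0 → (T^kv) v = 0 → Hf p q u v = 0 by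
    intro u hu v hv
    obtain ⟨ku, hku⟩ := (mem_Vchi_iff p q N χ u).mp hu (el p q N x₀)
    obtain ⟨kv, hkv⟩ := (mem_Vchi_iff p q N χ v).mp hv (el p q N x₀)
    exact H (ku + kv) ku kv u v le_rfl hku hkv
  intro n
  induction n with
  | zero =>
    intro ku kv u v hn hku hkv
    have hku0 : ku = 0 := by omega
    subst hku0
    rw [pow_zero, Module.End.one_apply] at hku
    rw [hku, Hf_zero_left]
  | succ n ihn =>
    intro ku kv u v hn hku hkv
    cases ku with
    | zero =>
      rw [pow_zero, Module.End.one_apply] at hku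
      rw [hku, Hf_zero_left]
    | succ ku =>
      cases kv with
      | zero =>
        rw [pow_zero, Module.End.one_apply] at hkv
        rw [hkv, Hf_zero_right]
      | succ kv =>
        have hTu : (T^ku) (T u) = 0 := by
          rw [← Module.End.mul_apply, ← pow_succ]
          exact hku
        have hTv : (T^kv) (T v) = 0 := by
          rw [← Module.End.mul_apply, ← pow_succ]
          exact hkv
        have h1 : Hf p q (T u) v = 0 := ihn ku (kv+1) (T u) v (by omega) hTu hkv
        have h2 : Hf p q u (T v) = 0 := ihn (ku+1) kv u (T v) (by omega) hku hTv
        have hid := Hf_skew_twist p q N hso x₀ c u v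
        rw [hT] at h1 h2
        rw [Tapply] at h1 h2
        rw [h1, h2, zero_add] at hid
        rcases mul_eq_zero.mp hid.symm with hz | hz
        · exact absurd (neg_eq_zero.mp hz) h0
        · exact hz


lemma self_orth
    (hso : ∀ X ∈ N, Xᵀ * JBig p q + JBig p q * X = 0)
    (hfix0 : ∀ X ∈ N, ∃ c : ℝ, X *ᵥ (Pi.single 0 1 : Fin (p+q+2) → ℝ)
      = c • (Pi.single 0 1 : Fin (p+q+2) → ℝ))
    (hfix1 : ∀ X ∈ N, ∃ c : ℝ, X *ᵥ (Pi.single 1 1 : Fin (p+q+2) → ℝ)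
      = c • (Pi.single 1 1 : Fin (p+q+2) → ℝ))
    (hself : ∀ x : N, χ (el p q N x) + star (χ (el p q N x)) = 0)
    (m : ℕ) (hGm : Gc p q N χ m ≤ Zc p q N χ) :
    ∀ j j', m ≤ j + j' → ∀ u ∈ Gc p q N χ j, ∀ v ∈ Gc p q N χ j', Hf p q u v = 0 := by
  intro j
  induction j with
  | zero =>
    intro j' hjj' u hu v hv
    have hvZ : v ∈ Zc p q N χ :=
      hGm (Gc_antitone p q N χ hso hfix0 hfix1 (by omega : m ≤ j') hv)
    obtain ⟨a, b, rfl⟩ := Submodule.mem_span_pair.mp hvZ.2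
    obtain ⟨huV, hu0, hu1⟩ := (Gc_le_W0 p q N χ hso hfix0 hfix1 0) hu
    rw [Hf_add_right, Hf_smul_right, Hf_smul_right, Hf_conj_symm p q (e0c p q) u,
      Hf_conj_symm p q (e1c p q) u, hu0, hu1]
    simp
  | succ j ih =>
    intro j' hjj' u hu v hv
    induction hu using Submodule.span_induction with
    | mem u hgen =>
      obtain ⟨x, w, hw, rfl⟩ := hgen
      have hv1 : toEndo p q ((x : N) : MatR p q) v - χ (el p q N x) • v ∈ Gc p q N χ (j'+1) :=
        mem_stepS p q N χ x hv
      have hrec := ih (j'+1) (by omega) w hw _ hv1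
      have hid := Hf_skew_twist p q N hso x (χ (el p q N x)) w v
      rw [hself x, neg_zero, zero_mul, hrec, add_zero] at hid
      exact hid
    | zero => rw [Hf_zero_left]
    | add u1 u2 h1 h2 ih1 ih2 => rw [Hf_add_left, ih1, ih2, add_zero]
    | smul a u hu ihu => rw [Hf_smul_left, ihu, mul_zero]

lemma iso_sup (hp : 1 ≤ p) (hpq : p ≤ q)
    (hso : ∀ X ∈ N, Xᵀ * JBig p q + JBig p q * X = 0)
    (hfix0 : ∀ X ∈ N, ∃ c : ℝ, X *ᵥ (Pi.single 0 1 : Fin (p+q+2) → ℝ)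
      = c • (Pi.single 0 1 : Fin (p+q+2) → ℝ))
    (hfix1 : ∀ X ∈ N, ∃ c : ℝ, X *ᵥ (Pi.single 1 1 : Fin (p+q+2) → ℝ)
      = c • (Pi.single 1 1 : Fin (p+q+2) → ℝ))
    (m : ℕ) (hGm : Gc p q N χ m ≤ Zc p q N χ) (j : ℕ) (hj : m ≤ 2*j) :
    ∀ u ∈ Gc p q N χ j ⊔ E2 p q, ∀ v ∈ Gc p q N χ j ⊔ E2 p q, Hf p q u v = 0 := by
  have hGG : ∀ u ∈ Gc p q N χ j, ∀ v ∈ Gc p q N χ j, Hf p q u v = 0 := by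
    by_cases hself : ∀ x : N, χ (el p q N x) + star (χ (el p q N x)) = 0
    · exact fun u hu v hv =>
        self_orth p q N χ hso hfix0 hfix1 hself m hGm j j (by omega) u hu v hv
    · push_neg at hself
      obtain ⟨x₀, h0⟩ := hself
      intro u hu v hv
      exact nonself_orth p q N χ hso x₀ h0 u
        ((Gc_le_W0 p q N χ hso hfix0 hfix1 j hu).1) v
        ((Gc_le_W0 p q N χ hso hfix0 hfix1 j hv).1)
  have hWE : ∀ u ∈ W0 p q N χ, ∀ z ∈ E2 p q, Hf p q u z = 0 ∧ Hf p q z u = 0 := by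
    intro u hu z hz
    obtain ⟨a, b, rfl⟩ := Submodule.mem_span_pair.mp hz
    obtain ⟨huV, hu0, hu1⟩ := hu
    constructor
    · rw [Hf_add_right, Hf_smul_right, Hf_smul_right, Hf_conj_symm p q (e0c p q) u,
        Hf_conj_symm p q (e1c p q) u, hu0, hu1]
      simp
    · rw [Hf_add_left, Hf_smul_left, Hf_smul_left, hu0, hu1]
      simp
  have hEE : ∀ z ∈ E2 p q, ∀ z' ∈ E2 p q, Hf p q z z' = 0 := by
    intro z hz z' hz'
    obtain ⟨a, b, rfl⟩ := Submodule.mem_span_pair.mp hz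
    obtain ⟨a', b', rfl⟩ := Submodule.mem_span_pair.mp hz'
    simp [Hf_add_left, Hf_add_right, Hf_smul_left, Hf_smul_right, Hf_e00 p q hpq,
      Hf_e01 p q hp hpq, Hf_e10 p q hp hpq, Hf_e11 p q hp hpq]
  intro u hu v hv
  obtain ⟨g, hg, z, hz, rfl⟩ := Submodule.mem_sup.mp hu
  obtain ⟨g', hg', z', hz', rfl⟩ := Submodule.mem_sup.mp hv
  have hgW := Gc_le_W0 p q N χ hso hfix0 hfix1 j hg
  have hg'W := Gc_le_W0 p q N χ hso hfix0 hfix1 j hg'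
  rw [Hf_add_left, Hf_add_right, Hf_add_right, hGG g hg g' hg',
    (hWE g hgW z' hz').1, (hWE g' hg'W z hz).2, hEE z hz z' hz']
  ring

lemma Fc_bound (hp : 1 ≤ p) (hpq : p ≤ q)
    (hso : ∀ X ∈ N, Xᵀ * JBig p q + JBig p q * X = 0)
    (hfix0 : ∀ X ∈ N, ∃ c : ℝ, X *ᵥ (Pi.single 0 1 : Fin (p+q+2) → ℝ)
      = c • (Pi.single 0 1 : Fin (p+q+2) → ℝ))
    (hfix1 : ∀ X ∈ N, ∃ c : ℝ, X *ᵥ (Pi.single 1 1 : Fin (p+q+2) → ℝ)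
      = c • (Pi.single 1 1 : Fin (p+q+2) → ℝ)) :
    Fc p q N χ (2*p+1) = ⊥ := by
  classical
  obtain ⟨K0, hK0⟩ := Fc_death p q N χ
  have hex : ∃ j, Gc p q N χ j ≤ Zc p q N χ := ⟨K0, by
    refine (G_le_Fc p q N χ K0).trans ?_
    rw [hK0]
    exact bot_le⟩
  set m := Nat.find hex with hmdef
  have hGm : Gc p q N χ m ≤ Zc p q N χ := Nat.find_spec hex
  have hmin : ∀ j, j < m → ¬ (Gc p q N χ j ≤ Zc p q N χ) := fun j hj => Nat.find_min hex hj
  have hstrict : ∀ j, j < m → ¬ (Gc p q N χ j ⊔ E2 p q ≤ Gc p q N χ (j+1) ⊔ E2 p q) := by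
    intro j hj hle
    apply hmin j hj
    have h1 : Gc p q N χ j ≤ Gc p q N χ (j+1) ⊔ Zc p q N χ := by
      intro v hv
      obtain ⟨w, hw, z, hz, hwz⟩ := Submodule.mem_sup.mp (hle (Submodule.mem_sup_left hv))
      have hvV : v ∈ Vchi p q N χ := (Gc_le_W0 p q N χ hso hfix0 hfix1 j hv).1
      have hwV : w ∈ Vchi p q N χ := (Gc_le_W0 p q N χ hso hfix0 hfix1 (j+1) hw).1
      have hzV : z ∈ Vchi p q N χ := by
        have hz' : z = v - w := by rw [← hwz]; abel
        rw [hz']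
        exact sub_mem hvV hwV
      rw [← hwz]
      exact Submodule.add_mem_sup hw ⟨hzV, hz⟩
    have hprop : ∀ k, j ≤ k → Gc p q N χ k ≤ Gc p q N χ (k+1) ⊔ Zc p q N χ := by
      intro k hk
      induction k with
      | zero =>
        have hj0 : j = 0 := Nat.le_zero.mp hk
        exact hj0 ▸ h1
      | succ k ihk =>
        rcases Nat.lt_or_ge j (k+1) with hlt | hge
        · have hstep := ihk (by omega)
          apply stepS_le
          intro x v hv
          obtain ⟨w, hw, z, hz, hwz⟩ := Submodule.mem_sup.mp (hstep hv)
          have hkill := EZkill p q N χ hfix0 hfix1 z hz x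
          have hdecomp : toEndo p q ((x : N) : MatR p q) v - χ (el p q N x) • v
              = (toEndo p q ((x : N) : MatR p q) w - χ (el p q N x) • w)
                + (toEndo p q ((x : N) : MatR p q) z - χ (el p q N x) • z) := by
            rw [← hwz, map_add, smul_add]
            abel
          rw [hdecomp, hkill, add_zero]
          exact Submodule.mem_sup_left (mem_stepS p q N χ x hw)
        · have hj' : j = k+1 := by omega
          exact hj' ▸ h1
    have hchain : ∀ k, j ≤ k → Gc p q N χ j ≤ Gc p q N χ k ⊔ Zc p q N χ := by
      intro k hk
      induction k, hk using Nat.le_induction with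
      | base => exact le_sup_left
      | succ k hk ihk =>
        exact ihk.trans (sup_le (hprop k hk) le_sup_right)
    exact (hchain m (le_of_lt hj)).trans (sup_le hGm le_rfl)
  have hcount : m ≤ 2*p - 1 := by
    rcases Nat.eq_zero_or_pos m with hm0 | hmpos
    · omega
    · set j₁ := m - m/2 with hj1
      have hiso := iso_sup p q N χ hp hpq hso hfix0 hfix1 m hGm j₁ (by omega)
      have hbound := iso_bound p q hpq (Gc p q N χ j₁ ⊔ E2 p q) hiso
      have hchain2 : ∀ t, t ≤ m/2 → 2 + t ≤ finrank ℂ ↥(Gc p q N χ (m - t) ⊔ E2 p q) := by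
        intro t
        induction t with
        | zero =>
          intro _
          have hmono := Submodule.finrank_mono (le_sup_right : E2 p q ≤ Gc p q N χ (m-0) ⊔ E2 p q)
          have hE := E2_rank p q
          omega
        | succ t iht =>
          intro ht
          have h1 := iht (by omega)
          have hlt : Gc p q N χ (m - t) ⊔ E2 p q < Gc p q N χ (m - (t+1)) ⊔ E2 p q := by
            have hle : Gc p q N χ (m - t) ⊔ E2 p q ≤ Gc p q N χ (m - (t+1)) ⊔ E2 p q :=
              sup_le_sup_right (Gc_antitone p q N χ hso hfix0 hfix1 (by omega)) _
            refine lt_of_le_of_ne hle ?_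
            intro heq
            have hidx : m - (t+1) + 1 = m - t := by omega
            refine hstrict (m - (t+1)) (by omega) ?_
            rw [hidx]
            exact heq.ge
          have := Submodule.finrank_lt_finrank_of_lt hlt
          omega
      have hfinal := hchain2 (m/2) le_rfl
      have hidx2 : m - m/2 = j₁ := hj1.symm
      rw [hidx2] at hfinal
      omega
  have h2 : Fc p q N χ (m+2) ≤ ⊥ := by
    have ha : Fc p q N χ (m+2) = stepS p q N χ (Fc p q N χ (m+1)) := rfl
    rw [ha]
    refine le_trans (stepS_mono p q N χ ?_) (stepS_Zc p q N χ hfix0 hfix1)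
    exact (Fc_succ_le_G p q N χ hso hfix0 hfix1 m).trans hGm
  rw [eq_bot_iff]
  exact le_trans (Fc_antitone p q N χ (show m+2 ≤ 2*p+1 by omega)) h2

end Weighted2







lemma toEndo_zero : toEndo p q 0 = 0 := by
  unfold toEndo
  rw [_root_.map_zero, _root_.map_zero]

lemma toEndo_add (A B : MatR p q) :
    toEndo p q (A + B) = toEndo p q A + toEndo p q B := by
  unfold toEndo
  rw [_root_.map_add, _root_.map_add]

lemma toEndo_smul (c : ℝ) (A : MatR p q) :
    toEndo p q (c • A) = (c : ℂ) • toEndo p q A := by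
  unfold toEndo
  have h : cmat p q (c • A) = (c : ℂ) • cmat p q A := by
    ext i j
    simp [cmat_apply, Matrix.map_apply, smul_eq_mul]
  rw [h, _root_.map_smul]

lemma toEndo_inj : Function.Injective (toEndo p q) := by
  intro A B h
  have h2 : cmat p q A = cmat p q B := Matrix.toLinAlgEquiv'.injective h
  ext i j
  have h3 := congrArg (fun M : Matrix (Fin (p+q+2)) (Fin (p+q+2)) ℂ => M i j) h2
  simp only [cmat_apply, Matrix.map_apply] at h3
  exact_mod_cast h3

lemma bracket_span_span {s t rel : Set (EndA p q)}
    (h : ∀ a ∈ s, ∀ b ∈ t, ⁅a, b⁆ ∈ Submodule.span ℂ rel) :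
    ∀ a ∈ Submodule.span ℂ s, ∀ b ∈ Submodule.span ℂ t,
      ⁅a, b⁆ ∈ Submodule.span ℂ rel := by
  intro a ha
  induction ha using Submodule.span_induction with
  | mem a haa =>
    intro b hb
    induction hb using Submodule.span_induction with
    | mem b hbb => exact h a haa b hbb
    | zero => rw [lie_zero]; exact zero_mem _
    | add b c hb hc ihb ihc => rw [lie_add]; exact add_mem ihb ihc
    | smul r b hb ihb => rw [lie_smul]; exact Submodule.smul_mem _ _ ihb
  | zero => intro b hb; rw [zero_lie]; exact zero_mem _
  | add a c ha hc iha ihc => intro b hb; rw [add_lie]; exact add_mem (iha b hb) (ihc b hb)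
  | smul r a ha iha => intro b hb; rw [smul_lie]; exact Submodule.smul_mem _ _ (iha b hb)

/-- the complexified algebra is nilpotent -/
lemma nilL' (hnil : LieRing.IsNilpotent N) : LieRing.IsNilpotent (L' p q N) := by
  obtain ⟨K, hK⟩ := (LieModule.isNilpotent_iff ℝ N N).mp hnil
  refine (LieModule.isNilpotent_iff ℂ _ _).mpr ?_
  refine ⟨K, ?_⟩
  have main : ∀ k, ∀ w : L' p q N, w ∈ lowerCentralSeries ℂ (L' p q N) (L' p q N) k →
      (w : EndA p q) ∈ Submodule.span ℂ (toEndo p q ''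
        ((fun z : N => (z : MatR p q)) '' (lowerCentralSeries ℝ N N k : Set N))) := by
    intro k
    induction k with
    | zero =>
      intro w _
      have hset : ((fun z : N => (z : MatR p q)) ''
          ((lowerCentralSeries ℝ N N 0 : LieSubmodule ℝ N N) : Set N)) = (N : Set (MatR p q)) := by
        rw [LieModule.lowerCentralSeries_zero]
        ext a
        constructor
        · rintro ⟨z, -, rfl⟩; exact z.2
        · intro ha; exact ⟨⟨a, ha⟩, by trivial, rfl⟩
      rw [hset]
      exact w.2
    | succ k ih =>
      intro w hw
      rw [LieModule.lowerCentralSeries_succ, ← LieSubmodule.mem_toSubmodule,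
        LieSubmodule.lieIdeal_oper_eq_linear_span'] at hw
      induction hw using Submodule.span_induction with
      | mem w hwgen =>
        obtain ⟨x, -, n, hn, rfl⟩ := hwgen
        have hx : ((x : L' p q N) : EndA p q) ∈
            Submodule.span ℂ (toEndo p q '' (N : Set (MatR p q))) := (x : L' p q N).2
        have hn' := ih n hn
        have hbracket := bracket_span_span p q
          (s := toEndo p q '' (N : Set (MatR p q)))
          (t := toEndo p q '' ((fun z : N => (z : MatR p q)) ''
            (lowerCentralSeries ℝ N N k : Set N)))
          (rel := toEndo p q '' ((fun z : N => (z : MatR p q)) ''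
            (lowerCentralSeries ℝ N N (k+1) : Set N)))
          (by
            rintro a ⟨X, hX, rfl⟩ b ⟨Z, ⟨z', hz', rfl⟩, rfl⟩
            rw [← toEndo_bracket]
            apply Submodule.subset_span
            refine ⟨⁅X, (z' : MatR p q)⁆, ⟨⁅(⟨X, hX⟩ : N), z'⁆, ?_, rfl⟩, rfl⟩
            rw [LieModule.lowerCentralSeries_succ]
            exact LieSubmodule.lie_mem_lie (LieSubmodule.mem_top _) hz')
          _ hx _ hn'
        exact hbracket
      | zero => exact zero_mem _
      | add a b ha hb iha ihb =>
        have : ((a + b : L' p q N) : EndA p q) = (a : EndA p q) + (b : EndA p q) := rfl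
        rw [this]
        exact add_mem iha ihb
      | smul c a ha iha =>
        have : ((c • a : L' p q N) : EndA p q) = c • (a : EndA p q) := rfl
        rw [this]
        exact Submodule.smul_mem _ _ iha
  rw [eq_bot_iff]
  intro w hw
  have hmem := main K w hw
  have hset : ((fun z : N => (z : MatR p q)) '' (lowerCentralSeries ℝ N N K : Set N))
      = {(0 : MatR p q)} := by
    rw [hK]
    ext a
    simp only [Set.mem_image, Set.mem_singleton_iff]
    constructor
    · rintro ⟨z, hz, rfl⟩
      have : z = 0 := by simpa using hz
      rw [this]; rfl
    · rintro rfl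
      exact ⟨0, by simp, rfl⟩
  rw [hset, Set.image_singleton, toEndo_zero, Submodule.span_zero_singleton] at hmem
  have : (w : EndA p q) = 0 := (Submodule.mem_bot ℂ).mp hmem
  exact (LieSubmodule.mem_bot _).mpr (Subtype.ext this)

section Depth

variable [LieRing.IsNilpotent (L' p q N)] (χ : L' p q N → ℂ)

lemma stepFull (hne : genWeightSpace (Euc p q) χ ≠ ⊥)
    (y : L' p q N) {v : Euc p q} {j : ℕ} (hv : v ∈ Fc p q N χ j) :
    (y : EndA p q) v - χ y • v ∈ Fc p q N χ (j+1) := by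
  have hadd := LinearWeights.map_add (R := ℂ) (L := L' p q N) (M := Euc p q) χ hne
  have hsmul := LinearWeights.map_smul (R := ℂ) (L := L' p q N) (M := Euc p q) χ hne
  obtain ⟨a, ha⟩ := y
  induction ha using Submodule.span_induction with
  | mem a haa =>
    obtain ⟨X, hX, rfl⟩ := haa
    have hel : (⟨toEndo p q X, Submodule.subset_span ⟨X, hX, rfl⟩⟩ : L' p q N)
        = el p q N ⟨X, hX⟩ := Subtype.ext rfl
    rw [hel]
    exact mem_stepS p q N χ ⟨X, hX⟩ hv
  | zero =>
    have h0 : χ (⟨0, Submodule.zero_mem _⟩ : L' p q N) = 0 := by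
      have hz : (⟨0, Submodule.zero_mem _⟩ : L' p q N) = 0 := Subtype.ext rfl
      rw [hz]
      have := hadd 0 0
      simpa using this
    rw [h0]
    simp only [LinearMap.zero_apply, zero_smul, sub_zero]
    exact zero_mem _
  | add a b ha hb iha ihb =>
    have hsub : (⟨a + b, Submodule.add_mem _ ha hb⟩ : L' p q N)
        = (⟨a, ha⟩ : L' p q N) + ⟨b, hb⟩ := Subtype.ext rfl
    have hχ : χ ⟨a + b, Submodule.add_mem _ ha hb⟩ = χ ⟨a, ha⟩ + χ ⟨b, hb⟩ := by
      rw [hsub]; exact hadd _ _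
    have hexp : (a + b) v - χ (⟨a + b, Submodule.add_mem _ ha hb⟩ : L' p q N) • v
        = (a v - χ (⟨a, ha⟩ : L' p q N) • v) + (b v - χ (⟨b, hb⟩ : L' p q N) • v) := by
      rw [hχ, LinearMap.add_apply, add_smul]
      abel
    rw [hexp]
    exact add_mem iha ihb
  | smul c a ha iha =>
    have hsub : (⟨c • a, Submodule.smul_mem _ c ha⟩ : L' p q N)
        = c • (⟨a, ha⟩ : L' p q N) := Subtype.ext rfl
    have hχ : χ ⟨c • a, Submodule.smul_mem _ c ha⟩ = c * χ ⟨a, ha⟩ := by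
      rw [hsub, hsmul]
      rfl
    have hexp : (c • a) v - χ (⟨c • a, Submodule.smul_mem _ c ha⟩ : L' p q N) • v
        = c • (a v - χ (⟨a, ha⟩ : L' p q N) • v) := by
      rw [hχ, LinearMap.smul_apply, smul_sub, smul_smul]
    rw [hexp]
    exact Submodule.smul_mem _ _ iha

lemma depth (hne : genWeightSpace (Euc p q) χ ≠ ⊥) :
    ∀ k, ∀ w : L' p q N, w ∈ lowerCentralSeries ℂ (L' p q N) (L' p q N) (k+1) →
    ∀ j, ∀ v ∈ Fc p q N χ j, (w : EndA p q) v ∈ Fc p q N χ (j + k + 2) := by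
  intro k
  induction k with
  | zero =>
    intro w hw
    rw [LieModule.lowerCentralSeries_succ, ← LieSubmodule.mem_toSubmodule,
      LieSubmodule.lieIdeal_oper_eq_linear_span'] at hw
    induction hw using Submodule.span_induction with
    | mem w hwgen =>
      obtain ⟨y, -, z, -, rfl⟩ := hwgen
      intro j v hv
      have hid : ((⁅y, z⁆ : L' p q N) : EndA p q) v
          = ((y : EndA p q) ((z : EndA p q) v - χ z • v) - χ y • ((z : EndA p q) v - χ z • v))
            - ((z : EndA p q) ((y : EndA p q) v - χ y • v) - χ z • ((y : EndA p q) v - χ y • v)) := by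
        have hco : ((⁅y, z⁆ : L' p q N) : EndA p q)
            = (y : EndA p q) * (z : EndA p q) - (z : EndA p q) * (y : EndA p q) := rfl
        rw [hco]
        simp only [LinearMap.sub_apply, Module.End.mul_apply, map_sub, _root_.map_smul,
          smul_sub, smul_smul]
        rw [mul_comm (χ y) (χ z)]
        abel
      rw [hid]
      exact sub_mem
        (stepFull p q N χ hne y (stepFull p q N χ hne z hv))
        (stepFull p q N χ hne z (stepFull p q N χ hne y hv))
    | zero =>
      intro j v hv
      simp only [ZeroMemClass.coe_zero, LinearMap.zero_apply]
      exact zero_mem _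
    | add a b ha hb iha ihb =>
      intro j v hv
      have hco : ((a + b : L' p q N) : EndA p q) v = (a : EndA p q) v + (b : EndA p q) v := rfl
      rw [hco]
      exact add_mem (iha j v hv) (ihb j v hv)
    | smul c a ha iha =>
      intro j v hv
      have hco : ((c • a : L' p q N) : EndA p q) v = c • ((a : EndA p q) v) := rfl
      rw [hco]
      exact Submodule.smul_mem _ _ (iha j v hv)
  | succ k ihk =>
    intro w hw
    rw [LieModule.lowerCentralSeries_succ, ← LieSubmodule.mem_toSubmodule,
      LieSubmodule.lieIdeal_oper_eq_linear_span'] at hw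
    induction hw using Submodule.span_induction with
    | mem w hwgen =>
      obtain ⟨y, -, z, hz, rfl⟩ := hwgen
      intro j v hv
      have hid : ((⁅y, z⁆ : L' p q N) : EndA p q) v
          = ((y : EndA p q) ((z : EndA p q) v) - χ y • ((z : EndA p q) v))
            - (z : EndA p q) ((y : EndA p q) v - χ y • v) := by
        have hco : ((⁅y, z⁆ : L' p q N) : EndA p q)
            = (y : EndA p q) * (z : EndA p q) - (z : EndA p q) * (y : EndA p q) := rfl
        rw [hco]
        simp only [LinearMap.sub_apply, Module.End.mul_apply, map_sub, _root_.map_smul]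
        abel
      rw [hid]
      refine sub_mem ?_ ?_
      · exact stepFull p q N χ hne y (ihk z hz j v hv)
      · have h1 := ihk z hz (j+1) _ (stepFull p q N χ hne y hv)
        have hcast : (j+1) + k + 2 = j + (k+1) + 2 := by omega
        rw [hcast] at h1
        exact h1
    | zero =>
      intro j v hv
      simp only [ZeroMemClass.coe_zero, LinearMap.zero_apply]
      exact zero_mem _
    | add a b ha hb iha ihb =>
      intro j v hv
      have hco : ((a + b : L' p q N) : EndA p q) v = (a : EndA p q) v + (b : EndA p q) v := rfl
      rw [hco]
      exact add_mem (iha j v hv) (ihb j v hv)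
    | smul c a ha iha =>
      intro j v hv
      have hco : ((c • a : L' p q N) : EndA p q) v = c • ((a : EndA p q) v) := rfl
      rw [hco]
      exact Submodule.smul_mem _ _ (iha j v hv)

lemma lcs_complex_bot (hp : 1 ≤ p) (hpq : p ≤ q)
    (hso : ∀ X ∈ N, Xᵀ * JBig p q + JBig p q * X = 0)
    (hfix0 : ∀ X ∈ N, ∃ c : ℝ, X *ᵥ (Pi.single 0 1 : Fin (p+q+2) → ℝ)
      = c • (Pi.single 0 1 : Fin (p+q+2) → ℝ))
    (hfix1 : ∀ X ∈ N, ∃ c : ℝ, X *ᵥ (Pi.single 1 1 : Fin (p+q+2) → ℝ)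
      = c • (Pi.single 1 1 : Fin (p+q+2) → ℝ)) :
    ∀ w : L' p q N, w ∈ lowerCentralSeries ℂ (L' p q N) (L' p q N) (2*p) → w = 0 := by
  intro w hw
  have hkill : ∀ (χ : L' p q N → ℂ), ∀ v ∈ genWeightSpace (Euc p q) χ,
      (w : EndA p q) v = 0 := by
    intro χ v hv
    by_cases hne : genWeightSpace (Euc p q) χ = ⊥
    · rw [hne] at hv
      have : v = 0 := by simpa using hv
      rw [this]
      exact map_zero _
    · have h2p : 2*p = (2*p - 1) + 1 := by omega
      rw [h2p] at hw
      have hv0 : v ∈ Fc p q N χ 0 := by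
        show v ∈ Vchi p q N χ
        rw [Vchi, LieSubmodule.mem_toSubmodule]
        exact hv
      have hmem := depth p q N χ hne (2*p - 1) w hw 0 v hv0
      have hcast : 0 + (2*p - 1) + 2 = 2*p + 1 := by omega
      rw [hcast, Fc_bound p q N χ hp hpq hso hfix0 hfix1] at hmem
      simpa using hmem
  have hall : ∀ v : Euc p q, (w : EndA p q) v = 0 := by
    intro v
    have hvtop : v ∈ (⊤ : LieSubmodule ℂ (L' p q N) (Euc p q)) := trivial
    rw [← LieModule.iSup_genWeightSpace_eq_top ℂ (L' p q N) (Euc p q)] at hvtop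
    induction hvtop using LieSubmodule.iSup_induction' with
    | mem χ v hv => exact hkill χ v hv
    | zero => exact map_zero _
    | add a b ha hb iha ihb => rw [map_add, iha, ihb, add_zero]
  have hcoe : (w : EndA p q) = 0 := LinearMap.ext hall
  exact Subtype.ext hcoe

end Depth

lemma real_lcs_image : ∀ k, ∀ z : N,
    z ∈ lowerCentralSeries ℝ N N k →
    ∃ w : L' p q N, w ∈ lowerCentralSeries ℂ (L' p q N) (L' p q N) k ∧
      (w : EndA p q) = toEndo p q (z : MatR p q) := by
  intro k
  induction k with
  | zero =>
    intro z _
    exact ⟨el p q N z, by rw [LieModule.lowerCentralSeries_zero]; trivial, rfl⟩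
  | succ k ih =>
    intro z hz
    rw [LieModule.lowerCentralSeries_succ, ← LieSubmodule.mem_toSubmodule,
      LieSubmodule.lieIdeal_oper_eq_linear_span'] at hz
    induction hz using Submodule.span_induction with
    | mem z hzgen =>
      obtain ⟨x, -, n, hn, rfl⟩ := hzgen
      obtain ⟨wn, hwn, hwe⟩ := ih n hn
      refine ⟨⁅el p q N x, wn⁆, ?_, ?_⟩
      · rw [LieModule.lowerCentralSeries_succ]
        exact LieSubmodule.lie_mem_lie (LieSubmodule.mem_top _) hwn
      · have hco : ((⁅el p q N x, wn⁆ : L' p q N) : EndA p q)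
            = ⁅toEndo p q ((x : N) : MatR p q), (wn : EndA p q)⁆ := rfl
        rw [hco, hwe, ← toEndo_bracket]
        rfl
    | zero =>
      refine ⟨0, zero_mem _, ?_⟩
      have : ((0 : N) : MatR p q) = 0 := rfl
      rw [this, toEndo_zero]
      rfl
    | add a b ha hb iha ihb =>
      obtain ⟨wa, hwa, hea⟩ := iha
      obtain ⟨wb, hwb, heb⟩ := ihb
      refine ⟨wa + wb, add_mem hwa hwb, ?_⟩
      have hca : ((a + b : N) : MatR p q) = (a : MatR p q) + (b : MatR p q) := rfl
      have hcw : ((wa + wb : L' p q N) : EndA p q) = (wa : EndA p q) + (wb : EndA p q) := rfl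
      rw [hcw, hca, toEndo_add, hea, heb]
    | smul c a ha iha =>
      obtain ⟨wa, hwa, hea⟩ := iha
      refine ⟨(c : ℂ) • wa, SMulMemClass.smul_mem _ hwa, ?_⟩
      have hca : ((c • a : N) : MatR p q) = c • (a : MatR p q) := rfl
      have hcw : (((c:ℂ) • wa : L' p q N) : EndA p q) = (c:ℂ) • (wa : EndA p q) := rfl
      rw [hcw, hca, toEndo_smul, hea]

end Main

end TP

/-- Let `p ≥ 1` and let `𝔫 ⊆ 𝔬(p+1,q+1)` be a nilpotent Lie subalgebra each of whose elements
preserves the two isotropic lines `ℝe₀` and `ℝe₁` (i.e. `𝔫` fixes the two points `[e₀]`, `[e₁]`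
of the lightlike geodesic `Λ`).  Then `𝔫_{2p} = 0`. -/
theorem two_point_stabilizer_degree_bound (p q : ℕ) (hp : 1 ≤ p) (hpq : p ≤ q)
    (N : LieSubalgebra ℝ (Matrix (Fin (p+q+2)) (Fin (p+q+2)) ℝ))
    (hso : ∀ X ∈ N, Xᵀ * JBig p q + JBig p q * X = 0)
    (hnil : LieRing.IsNilpotent N)
    (hfix0 : ∀ X ∈ N, ∃ c : ℝ, X *ᵥ (Pi.single 0 1 : Fin (p+q+2) → ℝ)
      = c • (Pi.single 0 1 : Fin (p+q+2) → ℝ))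
    (hfix1 : ∀ X ∈ N, ∃ c : ℝ, X *ᵥ (Pi.single 1 1 : Fin (p+q+2) → ℝ)
      = c • (Pi.single 1 1 : Fin (p+q+2) → ℝ)) :
    LieModule.lowerCentralSeries ℝ N N (2*p) = ⊥ := by
  haveI hinst : LieRing.IsNilpotent (TP.L' p q N) := TP.nilL' p q N hnil
  rw [eq_bot_iff]
  intro z hz
  obtain ⟨w, hw, hwe⟩ := TP.real_lcs_image p q N (2*p) z hz
  have hw0 := TP.lcs_complex_bot p q N hp hpq hso hfix0 hfix1 w hw
  rw [hw0] at hwe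
  have hz0 : (z : TP.MatR p q) = 0 := by
    apply TP.toEndo_inj p q
    rw [TP.toEndo_zero, ← hwe]
    rfl
  exact (LieSubmodule.mem_bot _).mpr (Subtype.ext hz0)
end

section
/- For all b, c ∈ ℝⁿ and every nonzero u ∈ ℝⁿ with Q^{p,q}(u) = 0, the limits lim_{t→+∞} φ(c + tu) and lim_{t→+∞} φ(b + tu) in ℝP^{n+1} coincide if and only if ⟨b − c, u⟩ = 0. -/
open Matrix Filter

noncomputable instance projTop (K V : Type*) [DivisionRing K] [AddCommGroup V] [Module K V]
    [TopologicalSpace V] : TopologicalSpace (Projectivization K V) :=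
  inferInstanceAs (TopologicalSpace (Quotient (projectivizationSetoid K V)))

/-- The Gram matrix of `Q^{p,q}` on `ℝⁿ`, `n = p+q` (zero-based indexing). -/
noncomputable def JSmall (p q : ℕ) : Matrix (Fin (p+q)) (Fin (p+q)) ℝ :=
  fun i j => if ((i:ℕ) + (j:ℕ) = p+q-1 ∧ ((i:ℕ) < p ∨ q ≤ (i:ℕ)))
      ∨ (i = j ∧ p ≤ (i:ℕ) ∧ (i:ℕ) < q) then 1 else 0

/-- The lift `(−½Q^{p,q}(x), x₁, …, x_n, 1) ∈ ℝ^{n+2}` of the inverse stereographic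
projection. -/
noncomputable def stereoVec (p q : ℕ) (x : Fin (p+q) → ℝ) : Fin (p+q+2) → ℝ :=
  fun i => if (i:ℕ) = 0 then -(x ⬝ᵥ (JSmall p q *ᵥ x))/2
    else if h : 1 ≤ (i:ℕ) ∧ (i:ℕ) ≤ p+q then x ⟨(i:ℕ)-1, by omega⟩
    else 1

theorem stereoVec_ne_zero (p q : ℕ) (x : Fin (p+q) → ℝ) : stereoVec p q x ≠ 0 := by
  intro h
  have h1 := congrFun h ⟨p+q+1, by omega⟩
  simp only [stereoVec, Pi.zero_apply] at h1
  split_ifs at h1 <;> first | assumption | omega | exact one_ne_zero h1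

/-- The inverse stereographic projection `φ : ℝⁿ → ℝP^{n+1}`. -/
noncomputable def phiMap (p q : ℕ) (x : Fin (p+q) → ℝ) :
    Projectivization ℝ (Fin (p+q+2) → ℝ) :=
  Projectivization.mk ℝ (stereoVec p q x) (stereoVec_ne_zero p q x)

section Gram

variable {m : ℕ}

lemma dot_self_pos {v : Fin m → ℝ} (hv : v ≠ 0) : 0 < v ⬝ᵥ v := by
  have h1 : 0 ≤ v ⬝ᵥ v := Finset.sum_nonneg fun i _ => mul_self_nonneg (v i)
  rcases h1.lt_or_eq with h | h
  · exact h
  · exact absurd (dotProduct_self_eq_zero.mp h.symm) hv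

noncomputable def gramMap : Projectivization ℝ (Fin m → ℝ) → (Fin m → Fin m → ℝ) :=
  Quotient.lift (fun v : {x : Fin m → ℝ // x ≠ 0} => fun i j => v.1 i * v.1 j / (v.1 ⬝ᵥ v.1))
    (by
      rintro ⟨v, hv⟩ ⟨w, hw⟩ ⟨g, hg⟩
      simp only at hg
      subst hg
      funext i j
      have hg0 : (g : ℝ) ≠ 0 := g.ne_zero
      have hw0 : w ⬝ᵥ w ≠ 0 := (dot_self_pos hw).ne'
      simp only [Units.smul_def, Pi.smul_apply, smul_eq_mul, smul_dotProduct,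
        dotProduct_smul]
      field_simp)

lemma gramMap_mk (v : Fin m → ℝ) (hv : v ≠ 0) :
    gramMap (Projectivization.mk ℝ v hv) = fun i j => v i * v j / (v ⬝ᵥ v) := rfl

lemma gramMap_continuous : Continuous (gramMap (m := m)) := by
  apply continuous_quot_lift
  refine continuous_pi fun i => continuous_pi fun j => ?_
  have hval : Continuous fun v : {x : Fin m → ℝ // x ≠ 0} => v.1 := continuous_subtype_val
  have hdot : Continuous fun v : {x : Fin m → ℝ // x ≠ 0} => v.1 ⬝ᵥ v.1 := by
    simp only [dotProduct]
    exact continuous_finset_sum _ fun k _ =>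
      ((continuous_apply k).comp hval).mul ((continuous_apply k).comp hval)
  exact (((continuous_apply i).comp hval).mul ((continuous_apply j).comp hval)).div hdot
    fun v => (dot_self_pos v.2).ne'

lemma gramMap_injective : Function.Injective (gramMap (m := m)) := by
  intro x y h
  induction x using Projectivization.ind with | h v hv =>
  induction y using Projectivization.ind with | h w hw =>
  rw [gramMap_mk, gramMap_mk] at h
  obtain ⟨i, hi⟩ := Function.ne_iff.mp hv
  have hvv : v ⬝ᵥ v ≠ 0 := (dot_self_pos hv).ne'
  have hww : w ⬝ᵥ w ≠ 0 := (dot_self_pos hw).ne'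
  have hii := congrFun (congrFun h i) i
  have hwi : w i ≠ 0 := by
    intro h0
    rw [h0, zero_mul, zero_div] at hii
    rcases div_eq_zero_iff.mp hii with h1 | h1
    · exact hi (mul_self_eq_zero.mp h1)
    · exact hvv h1
  rw [Projectivization.mk_eq_mk_iff']
  refine ⟨(v ⬝ᵥ v) * w i / ((w ⬝ᵥ w) * v i), funext fun j => ?_⟩
  have hij := congrFun (congrFun h i) j
  rw [div_eq_div_iff hvv hww] at hij
  simp only [Pi.smul_apply, smul_eq_mul]
  rw [div_mul_eq_mul_div, div_eq_iff (mul_ne_zero hww hi)]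
  linear_combination -hij

lemma tendsto_proj_unique {f : ℝ → Projectivization ℝ (Fin m → ℝ)}
    {L L' : Projectivization ℝ (Fin m → ℝ)}
    (h : Tendsto f atTop (nhds L)) (h' : Tendsto f atTop (nhds L')) : L = L' :=
  gramMap_injective <| tendsto_nhds_unique
    ((gramMap_continuous.tendsto L).comp h) ((gramMap_continuous.tendsto L').comp h')

lemma tendsto_mk {g : ℝ → Fin m → ℝ} {w : Fin m → ℝ} (hw : w ≠ 0)
    (hg : Tendsto g atTop (nhds w))
    {f : ℝ → Projectivization ℝ (Fin m → ℝ)}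
    (hf : ∀ᶠ t in atTop, ∃ h : g t ≠ 0, f t = Projectivization.mk ℝ (g t) h) :
    Tendsto f atTop (nhds (Projectivization.mk ℝ w hw)) := by
  set G : ℝ → {x : Fin m → ℝ // x ≠ 0} :=
    fun t => if h : g t = 0 then ⟨w, hw⟩ else ⟨g t, h⟩ with hG
  have hGt : Tendsto G atTop (nhds ⟨w, hw⟩) := by
    rw [tendsto_subtype_rng]
    apply hg.congr'
    filter_upwards [hf] with t ht
    obtain ⟨h, _⟩ := ht
    simp [hG, dif_neg h]
  have hcont : Continuous (Quotient.mk'' :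
      {x : Fin m → ℝ // x ≠ 0} → Projectivization ℝ (Fin m → ℝ)) := continuous_quot_mk
  have h2 := (hcont.tendsto _).comp hGt
  apply h2.congr'
  filter_upwards [hf] with t ht
  obtain ⟨h, heq⟩ := ht
  simp only [Function.comp_apply, hG, dif_neg h]
  exact heq.symm

end Gram

lemma JSmall_symm (p q : ℕ) (v w : Fin (p+q) → ℝ) :
    v ⬝ᵥ (JSmall p q *ᵥ w) = w ⬝ᵥ (JSmall p q *ᵥ v) := by
  have hJ : (JSmall p q)ᵀ = JSmall p q := by
    ext i j
    simp only [JSmall, Matrix.transpose_apply, Fin.ext_iff]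
    have hi := i.isLt
    have hj := j.isLt
    split_ifs <;> first | rfl | omega
  rw [Matrix.dotProduct_mulVec, ← Matrix.mulVec_transpose, hJ, dotProduct_comm]

/-- The limit vector of `φ(c + tu)` as `t → ∞`. -/
noncomputable def lvec (p q : ℕ) (c u : Fin (p+q) → ℝ) : Fin (p+q+2) → ℝ :=
  fun i => if (i:ℕ) = 0 then -(c ⬝ᵥ (JSmall p q *ᵥ u))
    else if h : 1 ≤ (i:ℕ) ∧ (i:ℕ) ≤ p+q then u ⟨(i:ℕ)-1, by omega⟩
    else 0

lemma lvec_zero (p q : ℕ) (c u : Fin (p+q) → ℝ) :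
    lvec p q c u ⟨0, by omega⟩ = -(c ⬝ᵥ (JSmall p q *ᵥ u)) := by
  simp [lvec]

lemma lvec_succ (p q : ℕ) (c u : Fin (p+q) → ℝ) (j : Fin (p+q)) :
    lvec p q c u ⟨(j:ℕ)+1, by omega⟩ = u j := by
  have hj := j.isLt
  simp only [lvec]
  rw [if_neg (by omega), dif_pos (by omega)]
  exact congrArg u (Fin.ext (by simp))

lemma lvec_ne_zero (p q : ℕ) (c : Fin (p+q) → ℝ) {u : Fin (p+q) → ℝ} (hu : u ≠ 0) :
    lvec p q c u ≠ 0 := by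
  obtain ⟨j, hj⟩ := Function.ne_iff.mp hu
  intro h
  exact hj (by rw [← lvec_succ p q c u j, h]; rfl)

lemma tendsto_scaled (p q : ℕ) (c u : Fin (p+q) → ℝ)
    (hnull : u ⬝ᵥ (JSmall p q *ᵥ u) = 0) :
    Tendsto (fun t : ℝ => t⁻¹ • stereoVec p q (c + t • u)) atTop (nhds (lvec p q c u)) := by
  rw [tendsto_pi_nhds]
  intro i
  have hexp : ∀ t : ℝ, (c + t • u) ⬝ᵥ (JSmall p q *ᵥ (c + t • u))
      = c ⬝ᵥ (JSmall p q *ᵥ c) + (2*t) * (c ⬝ᵥ (JSmall p q *ᵥ u)) := by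
    intro t
    rw [Matrix.mulVec_add, Matrix.mulVec_smul, dotProduct_add, add_dotProduct,
      add_dotProduct, dotProduct_smul, smul_dotProduct, smul_dotProduct,
      dotProduct_smul, hnull, JSmall_symm p q u c]
    simp only [smul_eq_mul]
    ring
  rcases Nat.eq_zero_or_pos (i:ℕ) with h0 | hpos
  · simp only [Pi.smul_apply, smul_eq_mul, stereoVec, lvec, h0, if_pos rfl]
    simp only [hexp]
    have hlim : Tendsto (fun t : ℝ =>
        (-(c ⬝ᵥ (JSmall p q *ᵥ c))/2) * t⁻¹ + -(c ⬝ᵥ (JSmall p q *ᵥ u)))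
        atTop (nhds (-(c ⬝ᵥ (JSmall p q *ᵥ u)))) := by
      have h1 := tendsto_inv_atTop_zero.const_mul (-(c ⬝ᵥ (JSmall p q *ᵥ c))/2)
      simpa using h1.add (tendsto_const_nhds (x := -(c ⬝ᵥ (JSmall p q *ᵥ u))))
    apply hlim.congr'
    filter_upwards [eventually_ge_atTop (1:ℝ)] with t ht
    have ht0 : t ≠ 0 := by linarith
    simp only [↓reduceIte]
    field_simp
    ring
  · by_cases h : 1 ≤ (i:ℕ) ∧ (i:ℕ) ≤ p+q
    · have hc0 : ((i:ℕ) = 0) = False := eq_false (by omega)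
      have hc1 : (1 ≤ (i:ℕ) ∧ (i:ℕ) ≤ p+q) = True := eq_true h
      simp only [Pi.smul_apply, smul_eq_mul, stereoVec, lvec, hc0, if_false, hc1, dite_true]
      set j : Fin (p+q) := ⟨(i:ℕ)-1, by omega⟩
      simp only [Pi.add_apply, Pi.smul_apply, smul_eq_mul]
      have hlim : Tendsto (fun t : ℝ => c j * t⁻¹ + u j) atTop (nhds (u j)) := by
        have h1 := tendsto_inv_atTop_zero.const_mul (c j)
        simpa using h1.add (tendsto_const_nhds (x := u j))
      apply hlim.congr'
      filter_upwards [eventually_ge_atTop (1:ℝ)] with t ht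
      have ht0 : t ≠ 0 := by linarith
      field_simp
    · have hc0 : ((i:ℕ) = 0) = False := eq_false (by omega)
      have hc1 : (1 ≤ (i:ℕ) ∧ (i:ℕ) ≤ p+q) = False := eq_false h
      simp only [Pi.smul_apply, smul_eq_mul, stereoVec, lvec, hc0, if_false, hc1, dite_false]
      simpa using tendsto_inv_atTop_zero

lemma tendsto_phi (p q : ℕ) (c : Fin (p+q) → ℝ) {u : Fin (p+q) → ℝ} (hu : u ≠ 0)
    (hnull : u ⬝ᵥ (JSmall p q *ᵥ u) = 0) :
    Tendsto (fun t : ℝ => phiMap p q (c + t • u)) atTop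
      (nhds (Projectivization.mk ℝ (lvec p q c u) (lvec_ne_zero p q c hu))) := by
  apply tendsto_mk (lvec_ne_zero p q c hu) (tendsto_scaled p q c u hnull)
  filter_upwards [eventually_gt_atTop (0:ℝ)] with t ht
  have ht0 : t ≠ 0 := ht.ne'
  refine ⟨smul_ne_zero (inv_ne_zero ht0) (stereoVec_ne_zero p q _), ?_⟩
  rw [phiMap, Projectivization.mk_eq_mk_iff']
  exact ⟨t, by rw [smul_smul, mul_inv_cancel₀ ht0, one_smul]⟩

/-- For all `b, c ∈ ℝⁿ` and every nonzero null vector `u`, the limits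
`lim_{t→+∞} φ(c + tu)` and `lim_{t→+∞} φ(b + tu)` in `ℝP^{n+1}` coincide if and only if
`⟨b − c, u⟩ = 0`. -/
theorem stereo_lightlike_lines_same_limit_iff (p q : ℕ) (hp : 1 ≤ p) (hpq : p ≤ q)
    (hn : 3 ≤ p+q) (b c u : Fin (p+q) → ℝ) (hu : u ≠ 0)
    (hnull : u ⬝ᵥ (JSmall p q *ᵥ u) = 0) :
    (∃ L : Projectivization ℝ (Fin (p+q+2) → ℝ),
        Tendsto (fun t : ℝ => phiMap p q (c + t • u)) atTop (nhds L) ∧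
        Tendsto (fun t : ℝ => phiMap p q (b + t • u)) atTop (nhds L)) ↔
      (b - c) ⬝ᵥ (JSmall p q *ᵥ u) = 0 := by
  have hLc := tendsto_phi p q c hu hnull
  have hLb := tendsto_phi p q b hu hnull
  constructor
  · rintro ⟨L, hc', hb'⟩
    have e1 : L = Projectivization.mk ℝ (lvec p q c u) (lvec_ne_zero p q c hu) :=
      tendsto_proj_unique hc' hLc
    have e2 : L = Projectivization.mk ℝ (lvec p q b u) (lvec_ne_zero p q b hu) :=
      tendsto_proj_unique hb' hLb
    have e3 := e2.symm.trans e1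
    rw [Projectivization.mk_eq_mk_iff] at e3
    obtain ⟨a, ha⟩ := e3
    obtain ⟨j, hj⟩ := Function.ne_iff.mp hu
    have h1 := congrFun ha ⟨(j:ℕ)+1, by omega⟩
    rw [Pi.smul_apply, lvec_succ, lvec_succ, Units.smul_def, smul_eq_mul] at h1
    have hj' : u j ≠ 0 := hj
    have ha1 : (a : ℝ) = 1 := mul_right_cancel₀ hj' (by rw [h1, one_mul])
    have h0 := congrFun ha ⟨0, by omega⟩
    rw [Pi.smul_apply, lvec_zero, lvec_zero, Units.smul_def, smul_eq_mul, ha1, one_mul] at h0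
    rw [sub_dotProduct, sub_eq_zero]
    linarith [h0]
  · intro h
    rw [sub_dotProduct, sub_eq_zero] at h
    have heq : lvec p q b u = lvec p q c u := by
      funext i
      simp only [lvec, h]
    refine ⟨Projectivization.mk ℝ (lvec p q c u) (lvec_ne_zero p q c hu), hLc, ?_⟩
    have hmk : Projectivization.mk ℝ (lvec p q b u) (lvec_ne_zero p q b hu)
        = Projectivization.mk ℝ (lvec p q c u) (lvec_ne_zero p q c hu) := by
      rw [Projectivization.mk_eq_mk_iff']
      exact ⟨1, by rw [one_smul, heq]⟩
    rwa [hmk] at hLb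
end
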